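/- arXiv:1601.03683 — 8 statements merged into one kernel-verified Lean document; each statement's English description precedes it below -/
import Mathlib

section
/- Let n ≥ 3 and let G = ℤ/nℤ. If n = p^α is a prime power, then the complement of the proper power graph of G has exactly n − 1 connected components (all vertices are isolated). If n has at least two distinct prime divisors, then the complement of the proper power graph of G has exactly φ(n) + 1 connected components, where φ is Euler's totient function. -/
open SimpleGraph

/-- The complement of the proper power graph of a finite group `G`: vertices are the
non-identity elements of `G`, and two vertices are adjacent iff neither is a power
of the other. -/
def propPowerCompl (G : Type*) [Group G] : SimpleGraph {g : G // g ≠ 1} where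
  Adj u v := (u : G) ∉ Subgroup.zpowers (v : G) ∧ (v : G) ∉ Subgroup.zpowers (u : G)
  symm := ⟨fun u v h => ⟨h.2, h.1⟩⟩
  loopless := ⟨fun u h => h.1 (Subgroup.mem_zpowers _)⟩

set_option linter.unusedSectionVars false

variable {n : ℕ} [NeZero n]

lemma ppc_cast_dvd_iff {d : ℕ} (hd : d ∣ n) (b : ZMod n) : (d : ZMod n) ∣ b ↔ d ∣ b.val := by
  have hb : ((b.val : ℕ) : ZMod n) = b := ZMod.natCast_rightInverse b
  constructor
  · rintro ⟨c, hc⟩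
    have hc' : ((c.val : ℕ) : ZMod n) = c := ZMod.natCast_rightInverse c
    have : ((b.val : ℕ) : ZMod n) = ((d * c.val : ℕ) : ZMod n) := by
      push_cast; rw [hb, hc', hc]
    have h2 : b.val ≡ d * c.val [MOD n] := (ZMod.natCast_eq_natCast_iff _ _ _).mp this
    have h3 : b.val ≡ d * c.val [MOD d] := h2.of_dvd hd
    have h4 : b.val ≡ 0 [MOD d] := h3.trans (Nat.modEq_zero_iff_dvd.mpr ⟨c.val, rfl⟩)
    exact Nat.modEq_zero_iff_dvd.mp h4
  · rintro hdb
    rw [← hb]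
    exact Nat.cast_dvd_cast hdb

lemma ppc_dvd_gcd_cast (a : ZMod n) : a ∣ ((Nat.gcd a.val n : ℕ) : ZMod n) := by
  refine ⟨(Nat.gcdA a.val n : ZMod n), ?_⟩
  have h := Nat.gcd_eq_gcd_ab a.val n
  have hb : ((a.val : ℕ) : ZMod n) = a := ZMod.natCast_rightInverse a
  have : ((Nat.gcd a.val n : ℤ) : ZMod n)
      = ((a.val : ℤ) : ZMod n) * (Nat.gcdA a.val n : ZMod n) := by
    rw [h]; push_cast; simp [ZMod.natCast_self]
  simpa [hb] using this

lemma ppc_gcd_cast_dvd (a : ZMod n) : ((Nat.gcd a.val n : ℕ) : ZMod n) ∣ a := by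
  have hb : ((a.val : ℕ) : ZMod n) = a := ZMod.natCast_rightInverse a
  have : ((Nat.gcd a.val n : ℕ) : ZMod n) ∣ ((a.val : ℕ) : ZMod n) :=
    Nat.cast_dvd_cast (Nat.gcd_dvd_left _ _)
  rwa [hb] at this

lemma ppc_dvd_iff (a b : ZMod n) : a ∣ b ↔ Nat.gcd a.val n ∣ Nat.gcd b.val n := by
  constructor
  · intro hab
    have h1 : (Nat.gcd a.val n : ZMod n) ∣ b := (ppc_gcd_cast_dvd a).trans hab
    have h2 : Nat.gcd a.val n ∣ b.val := (ppc_cast_dvd_iff (Nat.gcd_dvd_right _ _) b).mp h1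
    exact Nat.dvd_gcd h2 (Nat.gcd_dvd_right _ _)
  · intro h
    have h1 : (Nat.gcd a.val n : ZMod n) ∣ b := by
      refine (ppc_cast_dvd_iff (Nat.gcd_dvd_right _ _) b).mpr (h.trans (Nat.gcd_dvd_left _ _))
    exact (ppc_dvd_gcd_cast a).trans h1

lemma ppc_mem_zpowers_iff (x y : Multiplicative (ZMod n)) :
    x ∈ Subgroup.zpowers y ↔ Multiplicative.toAdd y ∣ Multiplicative.toAdd x := by
  rw [Subgroup.mem_zpowers_iff]
  constructor
  · rintro ⟨k, hk⟩
    refine ⟨(k : ZMod n), ?_⟩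
    have : Multiplicative.toAdd (y ^ k) = k • Multiplicative.toAdd y := by simp
    rw [hk] at this
    rw [this, zsmul_eq_mul, mul_comm]
  · rintro ⟨c, hc⟩
    have hc' : ((c.val : ℕ) : ZMod n) = c := ZMod.natCast_rightInverse c
    refine ⟨(c.val : ℤ), ?_⟩
    apply Multiplicative.toAdd.injective
    have : Multiplicative.toAdd (y ^ (c.val : ℤ)) = (c.val : ℤ) • Multiplicative.toAdd y := by simp
    rw [this, zsmul_eq_mul, hc]
    push_cast
    rw [hc', mul_comm]

/-- The proper-power-complement graph vertices of `ZMod n`. -/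
abbrev PPCV (n : ℕ) := {g : Multiplicative (ZMod n) // g ≠ 1}

def ppcD (x : PPCV n) : ℕ := Nat.gcd (Multiplicative.toAdd x.1).val n

lemma ppcD_dvd (x : PPCV n) : ppcD x ∣ n := Nat.gcd_dvd_right _ _

lemma ppc_toAdd_ne (x : PPCV n) : Multiplicative.toAdd x.1 ≠ 0 := by
  intro h
  exact x.2 (by simpa using congrArg Multiplicative.ofAdd h)

lemma ppcD_lt (x : PPCV n) : ppcD x < n := by
  have hne : (Multiplicative.toAdd x.1).val ≠ 0 := by
    intro h
    exact ppc_toAdd_ne x ((ZMod.val_eq_zero _).mp h)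
  calc ppcD x ≤ (Multiplicative.toAdd x.1).val :=
        Nat.le_of_dvd (Nat.pos_of_ne_zero hne) (Nat.gcd_dvd_left _ _)
    _ < n := ZMod.val_lt _

lemma ppc_adj_iff (x y : PPCV n) :
    (propPowerCompl (Multiplicative (ZMod n))).Adj x y ↔
      ¬ ppcD y ∣ ppcD x ∧ ¬ ppcD x ∣ ppcD y := by
  show (x.1 ∉ Subgroup.zpowers y.1 ∧ y.1 ∉ Subgroup.zpowers x.1) ↔ _
  rw [ppc_mem_zpowers_iff, ppc_mem_zpowers_iff, ppc_dvd_iff, ppc_dvd_iff]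
  exact Iff.rfl

lemma ppc_isUnit_iff (x : PPCV n) : IsUnit (Multiplicative.toAdd x.1) ↔ ppcD x = 1 := by
  have hb : (((Multiplicative.toAdd x.1).val : ℕ) : ZMod n) = Multiplicative.toAdd x.1 :=
    ZMod.natCast_rightInverse _
  rw [← hb, ZMod.isUnit_iff_coprime]
  exact Iff.rfl

def ppcHub (e : ℕ) (hpos : 0 < e) (hlt : e < n) : PPCV n :=
  ⟨Multiplicative.ofAdd (e : ZMod n), by
    intro h
    have h0 : (e : ZMod n) = 0 := by simpa using congrArg Multiplicative.toAdd h
    have hv := ZMod.val_cast_of_lt hlt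
    rw [h0, ZMod.val_zero] at hv
    omega⟩

lemma ppcD_hub (e : ℕ) (hpos : 0 < e) (hlt : e < n) (he : e ∣ n) :
    ppcD (ppcHub e hpos hlt) = e := by
  unfold ppcD ppcHub
  simp only [toAdd_ofAdd]
  rw [ZMod.val_cast_of_lt hlt]
  exact Nat.gcd_eq_left he

lemma ppc_prime_pow_not_dvd {r s a b : ℕ} (hr : r.Prime) (hs : s.Prime) (hrs : r ≠ s)
    (ha : 0 < a) : ¬ r ^ a ∣ s ^ b := by
  intro h
  have h1 : r ∣ s ^ b := dvd_trans (dvd_pow_self r ha.ne') h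
  exact hrs ((Nat.prime_dvd_prime_iff_eq hr hs).mp (hr.dvd_of_dvd_pow h1))

lemma ppc_hub_props (hn0 : n ≠ 0) {r s : ℕ} (hr : r.Prime) (hrn : r ∣ n)
    (hs : s.Prime) (hsn : s ∣ n) (hrs : s ≠ r) :
    0 < r ^ n.factorization r ∧ r ^ n.factorization r < n ∧ 1 < r ^ n.factorization r := by
  have hfr : 0 < n.factorization r := hr.factorization_pos_of_dvd hn0 hrn
  have h1 : 1 < r ^ n.factorization r := Nat.one_lt_pow hfr.ne' hr.one_lt
  have hdvd : r ^ n.factorization r ∣ n := Nat.ordProj_dvd n r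
  have hne : r ^ n.factorization r ≠ n := by
    intro h
    have : s ∣ r ^ n.factorization r := by rw [h]; exact hsn
    exact absurd ((Nat.prime_dvd_prime_iff_eq hs hr).mp (hs.dvd_of_dvd_pow this)) hrs
  exact ⟨by omega, lt_of_le_of_ne (Nat.le_of_dvd (Nat.pos_of_ne_zero hn0) hdvd) hne, h1⟩

lemma ppc_reachable_eq_of_isolated {V : Type*} {G : SimpleGraph V} {v w : V}
    (h : ∀ u, ¬ G.Adj v u) (hr : G.Reachable v w) : v = w := by
  obtain ⟨p⟩ := hr
  cases p with
  | nil => rfl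
  | cons ha _ => exact absurd ha (h _)

lemma ppc_unit_isolated (x : PPCV n) (hx : ppcD x = 1) (y : PPCV n) :
    ¬ (propPowerCompl (Multiplicative (ZMod n))).Adj x y := by
  rw [ppc_adj_iff]
  rintro ⟨-, h2⟩
  exact h2 (hx ▸ one_dvd _)

/-- reach the `p`-hub from any non-unit vertex, given a second prime `q`. -/
lemma ppc_reach_hub (hn0 : n ≠ 0) {p q : ℕ} (hp : p.Prime) (hq : q.Prime) (hpq : p ≠ q)
    (hpn : p ∣ n) (hqn : q ∣ n) (x : PPCV n) (hx : ppcD x ≠ 1) :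
    (propPowerCompl (Multiplicative (ZMod n))).Reachable x
      (ppcHub (p ^ n.factorization p) (ppc_hub_props hn0 hp hpn hq hqn (Ne.symm hpq)).1
        (ppc_hub_props hn0 hp hpn hq hqn (Ne.symm hpq)).2.1) := by
  set G := propPowerCompl (Multiplicative (ZMod n)) with hG
  obtain ⟨hPpos, hPlt, hP1⟩ := ppc_hub_props hn0 hp hpn hq hqn (Ne.symm hpq)
  set A : PPCV n := ppcHub (p ^ n.factorization p) hPpos hPlt with hA
  have hDA : ppcD A = p ^ n.factorization p := ppcD_hub _ _ _ (Nat.ordProj_dvd n p)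
  -- generic hub-reaches-A fact
  have hub_reach : ∀ (r : ℕ) (hr : r.Prime) (hrn : r ∣ n) (h1 : 0 < r ^ n.factorization r)
      (h2 : r ^ n.factorization r < n),
      G.Reachable (ppcHub (r ^ n.factorization r) h1 h2) A := by
    intro r hr hrn h1 h2
    by_cases hrp : r = p
    · subst hrp
      rfl
    · apply SimpleGraph.Adj.reachable
      rw [ppc_adj_iff, hDA, ppcD_hub _ _ _ (Nat.ordProj_dvd n r)]
      have hfr : 0 < n.factorization r := hr.factorization_pos_of_dvd hn0 hrn
      have hfp : 0 < n.factorization p := hp.factorization_pos_of_dvd hn0 hpn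
      exact ⟨ppc_prime_pow_not_dvd hp hr (Ne.symm hrp) hfp,
        ppc_prime_pow_not_dvd hr hp hrp hfr⟩
  -- basic facts about D := ppcD x
  set D := ppcD x with hD
  have hDdvd : D ∣ n := ppcD_dvd x
  have hDlt : D < n := ppcD_lt x
  have hD0 : D ≠ 0 := by
    intro h0
    rw [h0] at hDdvd
    exact hn0 (zero_dvd_iff.mp hDdvd)
  -- find a prime r with v_r(D) < v_r(n)
  have hq0 : 0 < n / D := Nat.div_pos hDlt.le (Nat.pos_of_ne_zero hD0)
  have hq1 : n / D ≠ 1 := by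
    intro h1
    have := Nat.div_mul_cancel hDdvd
    rw [h1, one_mul] at this
    omega
  obtain ⟨r, hr, hrdvd⟩ := Nat.exists_prime_and_dvd hq1
  have hrn : r ∣ n := hrdvd.trans (Nat.div_dvd_of_dvd hDdvd)
  have hfact : D.factorization r < n.factorization r := by
    have hmul : D * (n / D) = n := Nat.mul_div_cancel' hDdvd
    have := Nat.factorization_mul hD0 hq0.ne'
    rw [hmul] at this
    have h2 : 0 < (n / D).factorization r := hr.factorization_pos_of_dvd hq0.ne' hrdvd
    have h3 := congrArg (fun f => f r) this
    simp only [Finsupp.add_apply] at h3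
    omega
  have hRnd : ¬ r ^ n.factorization r ∣ D := by
    intro h
    have h1 : r ^ (D.factorization r + 1) ∣ D :=
      dvd_trans (pow_dvd_pow r hfact) h
    exact Nat.pow_succ_factorization_not_dvd hD0 hr h1
  obtain ⟨hRpos, hRlt, hR1⟩ :
      0 < r ^ n.factorization r ∧ r ^ n.factorization r < n ∧ 1 < r ^ n.factorization r := by
    by_cases hrp : r = p
    · subst hrp; exact ⟨hPpos, hPlt, hP1⟩
    · exact ppc_hub_props hn0 hr hrn hp hpn (Ne.symm hrp)
  set C : PPCV n := ppcHub (r ^ n.factorization r) hRpos hRlt with hC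
  have hDC : ppcD C = r ^ n.factorization r := ppcD_hub _ _ _ (Nat.ordProj_dvd n r)
  by_cases hcase : D ∣ r ^ n.factorization r
  · -- D is a nontrivial power of r; go through a hub of another prime s ≠ r
    have hrD : r ∣ D := by
      obtain ⟨j, hj, hDj⟩ := (Nat.dvd_prime_pow hr).mp hcase
      rcases Nat.eq_zero_or_pos j with h0 | h0
      · rw [h0, pow_zero] at hDj; exact absurd hDj hx
      · rw [hDj]; exact dvd_pow_self r h0.ne'
    obtain ⟨s, hs, hsn, hsr⟩ : ∃ s, s.Prime ∧ s ∣ n ∧ s ≠ r := by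
      by_cases hrp : r = p
      · exact ⟨q, hq, hqn, fun h => hpq (by omega)⟩
      · exact ⟨p, hp, hpn, fun h => hrp (by omega)⟩
    obtain ⟨hSpos, hSlt, hS1⟩ := ppc_hub_props hn0 hs hsn hr hrn (Ne.symm hsr)
    have hfs : 0 < n.factorization s := hs.factorization_pos_of_dvd hn0 hsn
    have hadj : G.Adj x (ppcHub (s ^ n.factorization s) hSpos hSlt) := by
      rw [ppc_adj_iff, ppcD_hub _ _ _ (Nat.ordProj_dvd n s)]
      constructor
      · intro h
        have : s ∣ D := dvd_trans (dvd_pow_self s hfs.ne') h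
        have : s ∣ r ^ n.factorization r := this.trans hcase
        exact hsr ((Nat.prime_dvd_prime_iff_eq hs hr).mp (hs.dvd_of_dvd_pow this))
      · intro h
        have : r ∣ s ^ n.factorization s := hrD.trans h
        exact hsr (((Nat.prime_dvd_prime_iff_eq hr hs).mp (hr.dvd_of_dvd_pow this))).symm
    exact hadj.reachable.trans (hub_reach s hs hsn hSpos hSlt)
  · -- x is adjacent to the r-hub C
    have hadj : G.Adj x C := by
      rw [ppc_adj_iff, hDC]
      exact ⟨hRnd, hcase⟩
    exact hadj.reachable.trans (hub_reach r hr hrn hRpos hRlt)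

lemma ppc_no_adj_of_primePow {p α : ℕ} (hp : p.Prime) (hn : n = p ^ α) (x y : PPCV n) :
    ¬ (propPowerCompl (Multiplicative (ZMod n))).Adj x y := by
  rw [ppc_adj_iff]
  rintro ⟨h1, h2⟩
  have hx' : ppcD x ∣ p ^ α := by rw [← hn]; exact ppcD_dvd x
  have hy' : ppcD y ∣ p ^ α := by rw [← hn]; exact ppcD_dvd y
  obtain ⟨i, hi, hxi⟩ := (Nat.dvd_prime_pow hp).mp hx'
  obtain ⟨j, hj, hyj⟩ := (Nat.dvd_prime_pow hp).mp hy'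
  rcases le_total i j with h | h
  · exact h2 (by rw [hxi, hyj]; exact pow_dvd_pow p h)
  · exact h1 (by rw [hxi, hyj]; exact pow_dvd_pow p h)

lemma ppc_card_vertices (hn : 1 < n) : Nat.card (PPCV n) = n - 1 := by
  haveI : NeZero n := ⟨by omega⟩
  rw [Nat.card_eq_fintype_card]
  have h1 : Fintype.card {g : Multiplicative (ZMod n) // ¬ (g = 1)}
      = Fintype.card (Multiplicative (ZMod n))
        - Fintype.card {g : Multiplicative (ZMod n) // g = 1} :=
    Fintype.card_subtype_compl _
  have h2 : Fintype.card {g : Multiplicative (ZMod n) // g = 1} = 1 :=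
    Fintype.card_subtype_eq _
  have h3 : Fintype.card (Multiplicative (ZMod n)) = n := by
    rw [Fintype.card_multiplicative, ZMod.card]
  have h4 : Fintype.card (PPCV n) = Fintype.card {g : Multiplicative (ZMod n) // ¬ (g = 1)} := by
    apply Fintype.card_congr
    exact Equiv.subtypeEquivRight (by intro g; exact Iff.rfl)
  omega

lemma ppc_case2 (hn : 3 ≤ n) {p q : ℕ} (hp : p.Prime) (hq : q.Prime) (hpq : p ≠ q)
    (hpn : p ∣ n) (hqn : q ∣ n) :
    Nat.card (propPowerCompl (Multiplicative (ZMod n))).ConnectedComponent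
      = Nat.totient n + 1 := by
  classical
  haveI : Fact (1 < n) := ⟨by omega⟩
  have hn0 : n ≠ 0 := by omega
  set G := propPowerCompl (Multiplicative (ZMod n)) with hG
  obtain ⟨hPpos, hPlt, hP1⟩ := ppc_hub_props hn0 hp hpn hq hqn (Ne.symm hpq)
  let f : PPCV n → Option (ZMod n)ˣ := fun x =>
    if h : IsUnit (Multiplicative.toAdd x.1) then some h.unit else none
  have hadj_inv : ∀ x y, G.Adj x y → f x = f y := by
    intro x y hxy
    by_cases hx : IsUnit (Multiplicative.toAdd x.1)
    · exact absurd hxy (ppc_unit_isolated x ((ppc_isUnit_iff x).mp hx) y)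
    · by_cases hy : IsUnit (Multiplicative.toAdd y.1)
      · exact absurd hxy.symm (ppc_unit_isolated y ((ppc_isUnit_iff y).mp hy) x)
      · simp only [f, dif_neg hx, dif_neg hy]
  have hwalk : ∀ (v w : PPCV n) (pth : G.Walk v w), f v = f w := by
    intro v w pth
    induction pth with
    | nil => rfl
    | cons ha _ ih => exact (hadj_inv _ _ ha).trans ih
  let F : G.ConnectedComponent → Option (ZMod n)ˣ :=
    SimpleGraph.ConnectedComponent.lift f (fun v w pth _ => hwalk v w pth)
  have hbij : Function.Bijective F := by
    constructor
    · refine SimpleGraph.ConnectedComponent.ind₂ ?_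
      intro x y h
      have hfxy : f x = f y := h
      by_cases hx : IsUnit (Multiplicative.toAdd x.1)
      · by_cases hy : IsUnit (Multiplicative.toAdd y.1)
        · simp only [f, dif_pos hx, dif_pos hy, Option.some_inj] at hfxy
          have : Multiplicative.toAdd x.1 = Multiplicative.toAdd y.1 := by
            rw [← hx.unit_spec, ← hy.unit_spec, hfxy]
          exact congrArg _ (Subtype.ext (Multiplicative.toAdd.injective this))
        · simp [f, dif_pos hx, dif_neg hy] at hfxy
      · by_cases hy : IsUnit (Multiplicative.toAdd y.1)
        · simp [f, dif_neg hx, dif_pos hy] at hfxy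
        · apply SimpleGraph.ConnectedComponent.sound
          have hx1 : ppcD x ≠ 1 := fun h1 => hx ((ppc_isUnit_iff x).mpr h1)
          have hy1 : ppcD y ≠ 1 := fun h1 => hy ((ppc_isUnit_iff y).mpr h1)
          exact (ppc_reach_hub hn0 hp hq hpq hpn hqn x hx1).trans
            (ppc_reach_hub hn0 hp hq hpq hpn hqn y hy1).symm
    · rintro (_ | u)
      · have hplt : p < n := by
          have hne : p ≠ n := by
            intro h
            rw [← h] at hqn
            exact hpq ((Nat.prime_dvd_prime_iff_eq hq hp).mp hqn).symm
          exact lt_of_le_of_ne (Nat.le_of_dvd (by omega) hpn) hne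
        refine ⟨SimpleGraph.connectedComponentMk G (ppcHub p hp.pos hplt), ?_⟩
        show f _ = none
        have : ¬ IsUnit (Multiplicative.toAdd (ppcHub p hp.pos hplt).1) := by
          intro h
          have := (ppc_isUnit_iff _).mp h
          rw [ppcD_hub p hp.pos hplt hpn] at this
          exact hp.one_lt.ne' this
        simp only [f, dif_neg this]
      · have hne : Multiplicative.ofAdd ((u : ZMod n)) ≠ (1 : Multiplicative (ZMod n)) := by
          intro h
          have h0 : (u : ZMod n) = 0 := by simpa using congrArg Multiplicative.toAdd h
          exact u.ne_zero h0
        refine ⟨SimpleGraph.connectedComponentMk G ⟨Multiplicative.ofAdd ((u : ZMod n)), hne⟩, ?_⟩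
        show f _ = some u
        have hu : IsUnit (Multiplicative.toAdd
            (Multiplicative.ofAdd ((u : ZMod n)))) := by simpa using u.isUnit
        simp only [f, dif_pos hu]
        exact congrArg some (Units.ext (by simpa using hu.unit_spec))
  rw [Nat.card_eq_of_bijective F hbij, Nat.card_eq_fintype_card, Fintype.card_option,
    ZMod.card_units_eq_totient n]

/-- For `n ≥ 3`, the complement of the proper power graph of `ℤ/nℤ` has `n − 1`
connected components when `n` is a prime power, and `φ(n) + 1` connected components
when `n` has at least two distinct prime divisors. -/
theorem propPowerCompl_zmod_card_connectedComponent (n : ℕ) (hn : 3 ≤ n) :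
    ((∃ p α : ℕ, p.Prime ∧ 1 ≤ α ∧ n = p ^ α) →
      Nat.card (propPowerCompl (Multiplicative (ZMod n))).ConnectedComponent = n - 1) ∧
    ((∃ p q : ℕ, p.Prime ∧ q.Prime ∧ p ≠ q ∧ p ∣ n ∧ q ∣ n) →
      Nat.card (propPowerCompl (Multiplicative (ZMod n))).ConnectedComponent =
        Nat.totient n + 1) := by
  haveI : NeZero n := ⟨by omega⟩
  constructor
  · rintro ⟨p, α, hp, hα, hne⟩
    set G := propPowerCompl (Multiplicative (ZMod n)) with hG
    have hiso := ppc_no_adj_of_primePow hp hne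
    have hbij : Function.Bijective (G.connectedComponentMk) := by
      constructor
      · intro x y h
        exact ppc_reachable_eq_of_isolated (hiso x) (SimpleGraph.ConnectedComponent.exact h)
      · exact fun c => Quot.exists_rep c
    rw [← Nat.card_eq_of_bijective _ hbij, ppc_card_vertices (by omega)]
  · rintro ⟨p, q, hp, hq, hpq, hpn, hqn⟩
    exact ppc_case2 hn hp hq hpq hpn hqn
end

section
/- Let α ≥ 3 and let G be the generalized quaternion group Q_{2^α} of order 2^α. Then the complement of the proper power graph of G has exactly 2 connected components: the unique element of order 2 forms one component (an isolated vertex), and all remaining non-identity elements form the other component. -/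
open SimpleGraph

namespace QGaux
open QuaternionGroup Subgroup SimpleGraph


open QuaternionGroup Subgroup

variable {n : ℕ}

lemma a_inv (i : ZMod (2*n)) : (a i : QuaternionGroup n)⁻¹ = a (-i) :=
  inv_eq_of_mul_eq_one_right (by rw [a_mul_a, add_neg_cancel]; rfl)

lemma mem_zpowers_a {i : ZMod (2*n)} {g : QuaternionGroup n}
    (hg : g ∈ zpowers (a i)) : ∃ j, g = a j := by
  rw [Subgroup.mem_zpowers_iff] at hg
  obtain ⟨k, rfl⟩ := hg
  induction k using Int.induction_on with
  | zero => exact ⟨0, rfl⟩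
  | succ m ih =>
      obtain ⟨j, hj⟩ := ih
      exact ⟨j + i, by rw [zpow_add_one, hj, a_mul_a]⟩
  | pred m ih =>
      obtain ⟨j, hj⟩ := ih
      exact ⟨j + -i, by rw [zpow_sub_one, hj, a_inv, a_mul_a]⟩

lemma neg_n : -((n : ZMod (2*n))) = (n : ZMod (2*n)) := by
  rw [neg_eq_iff_add_eq_zero, ← two_mul]
  exact_mod_cast ZMod.natCast_self (2*n)

lemma xa_pow_three (i : ZMod (2*n)) : (xa i : QuaternionGroup n) ^ 3 = xa (i + (n : ZMod (2*n))) := by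
  rw [pow_succ, xa_sq, a_mul_xa, sub_eq_add_neg, neg_n]

lemma mem_zpowers_xa [NeZero n] {i : ZMod (2*n)} {g : QuaternionGroup n}
    (hg : g ∈ zpowers (xa i)) :
    g = 1 ∨ g = a n ∨ g = xa i ∨ g = xa (i + (n : ZMod (2*n))) := by
  rw [← ((isOfFinOrder_of_finite _).mem_powers_iff_mem_zpowers),
    Submonoid.mem_powers_iff] at hg
  obtain ⟨m, rfl⟩ := hg
  have h4 : (xa i : QuaternionGroup n) ^ m = xa i ^ (m % 4) := by
    conv_lhs => rw [← Nat.div_add_mod m 4, pow_add, pow_mul, xa_pow_four, one_pow, one_mul]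
  rw [h4]
  have : m % 4 < 4 := Nat.mod_lt _ (by norm_num)
  interval_cases h : m % 4
  · exact Or.inl (pow_zero _)
  · exact Or.inr (Or.inr (Or.inl (pow_one _)))
  · exact Or.inr (Or.inl (xa_sq i))
  · exact Or.inr (Or.inr (Or.inr (xa_pow_three i)))


variable {n : ℕ}


variable {n : ℕ}

lemma n_ne_zero (hn : 2 ≤ n) : ((n : ZMod (2*n))) ≠ 0 := by
  rw [Ne, ZMod.natCast_eq_zero_iff]
  intro h
  have := Nat.le_of_dvd (by omega) h
  omega

lemma one_ne_n (hn : 2 ≤ n) : (1 : ZMod (2*n)) ≠ (n : ZMod (2*n)) := by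
  have : ((1 : ℕ) : ZMod (2*n)) ≠ (n : ZMod (2*n)) := by
    intro h
    have h2 := congrArg ZMod.val h
    rw [ZMod.val_natCast, ZMod.val_natCast, Nat.mod_eq_of_lt (by omega),
      Nat.mod_eq_of_lt (by omega)] at h2
    omega
  simpa using this

lemma one_ne_zero' (hn : 2 ≤ n) : (1 : ZMod (2*n)) ≠ 0 := by
  have : ((1 : ℕ) : ZMod (2*n)) ≠ 0 := by
    rw [Ne, ZMod.natCast_eq_zero_iff]
    intro h
    exact absurd (Nat.le_of_dvd one_pos h) (by omega)
  simpa using this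

lemma a_ne_one {i : ZMod (2*n)} (hi : i ≠ 0) : (a i : QuaternionGroup n) ≠ 1 := by
  rw [one_def]; intro h; exact hi (by injection h)

lemma xa_ne_one (i : ZMod (2*n)) : (xa i : QuaternionGroup n) ≠ 1 := by
  rw [one_def]; intro h; cases h

lemma orderOf_a_n (hn : 2 ≤ n) : orderOf (a (n : ZMod (2*n)) : QuaternionGroup n) = 2 := by
  apply orderOf_eq_prime
  · rw [sq, a_mul_a, ← Nat.cast_add, ← two_mul, ZMod.natCast_self]; rfl
  · exact a_ne_one (n_ne_zero hn)

lemma eq_a_n_of_orderOf_eq_two (hn : 2 ≤ n) {g : QuaternionGroup n}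
    (hg : orderOf g = 2) : g = a (n : ZMod (2*n)) := by
  haveI : NeZero n := ⟨by omega⟩
  have hsq : g ^ 2 = 1 := by rw [← hg]; exact pow_orderOf_eq_one g
  have hne : g ≠ 1 := by
    intro h; rw [h, orderOf_one] at hg; omega
  cases g with
  | a i =>
      congr 1
      rw [sq, a_mul_a, one_def] at hsq
      have hii : i + i = 0 := by injection hsq
      have hcast : ((2 * i.val : ℕ) : ZMod (2*n)) = 0 := by
        rw [Nat.cast_mul, Nat.cast_ofNat, ZMod.natCast_zmod_val]
        linear_combination hii
      rw [ZMod.natCast_eq_zero_iff] at hcast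
      have hval : i.val < 2 * n := i.val_lt
      have hndvd : n ∣ i.val := (Nat.mul_dvd_mul_iff_left (by omega : 0 < 2)).mp hcast
      obtain ⟨t, ht⟩ := hndvd
      have hine : i ≠ 0 := by
        intro h; exact hne (by rw [h, one_def])
      have hvne : i.val ≠ 0 := by
        intro h; apply hine; rw [← ZMod.natCast_zmod_val i, h]; simp
      have ht2 : t < 2 := by nlinarith
      have ht0 : t ≠ 0 := by rintro rfl; simp [ht] at hvne
      have ht1 : t = 1 := by omega
      rw [← ZMod.natCast_zmod_val i, ht, ht1, mul_one]
  | xa i =>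
      rw [orderOf_xa] at hg
      omega


lemma reach_eq {V : Type*} {G : SimpleGraph V} {u : V} (h : ∀ w, ¬ G.Adj u w) {x : V}
    (hx : G.Reachable u x) : u = x := by
  obtain ⟨p⟩ := hx
  cases p with
  | nil => rfl
  | cons ha _ => exact absurd ha (h _)

theorem main (n : ℕ) (hn : 2 ≤ n)
    (hcard : ∃ t, Nat.card (QuaternionGroup n) = 2 ^ t) :
    Nat.card
        (propPowerCompl (QuaternionGroup n)).ConnectedComponent = 2 ∧
    (∃! u : {g : QuaternionGroup n // g ≠ 1}, orderOf (u : QuaternionGroup n) = 2) ∧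
    (∀ u v : {g : QuaternionGroup n // g ≠ 1},
      orderOf (u : QuaternionGroup n) = 2 →
        ¬ (propPowerCompl (QuaternionGroup n)).Adj u v) ∧
    (∀ u v : {g : QuaternionGroup n // g ≠ 1},
      orderOf (u : QuaternionGroup n) ≠ 2 →
      orderOf (v : QuaternionGroup n) ≠ 2 →
        (propPowerCompl (QuaternionGroup n)).Reachable u v) := by
  haveI : NeZero n := ⟨by omega⟩
  set Γ := propPowerCompl (QuaternionGroup n) with hΓ
  -- key adjacency lemmas
  have key1 : ∀ i j : ZMod (2*n), i ≠ 0 → i ≠ (n : ZMod (2*n)) →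
      (a i : QuaternionGroup n) ∉ zpowers (xa j) ∧ (xa j : QuaternionGroup n) ∉ zpowers (a i) := by
    intro i j hi0 hin
    constructor
    · intro hmem
      rcases mem_zpowers_xa hmem with h | h | h | h
      · exact a_ne_one hi0 h
      · exact hin (by injection h)
      · cases h
      · cases h
    · intro hmem
      obtain ⟨j', hj'⟩ := mem_zpowers_a hmem
      cases hj'
  have key2 : ∀ i j : ZMod (2*n), i ≠ j → i ≠ j + (n : ZMod (2*n)) →
      (xa i : QuaternionGroup n) ∉ zpowers (xa j) := by
    intro i j hij hijn hmem
    rcases mem_zpowers_xa hmem with h | h | h | h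
    · exact xa_ne_one i h
    · cases h
    · exact hij (by injection h)
    · exact hijn (by injection h)
  -- the order 2 vertex
  have h0n := n_ne_zero hn
  set u0 : {g : QuaternionGroup n // g ≠ 1} := ⟨a (n : ZMod (2*n)), a_ne_one h0n⟩ with hu0
  have hu0ord : orderOf (u0 : QuaternionGroup n) = 2 := orderOf_a_n hn
  -- conjunct 2
  have conj2 : ∃! u : {g : QuaternionGroup n // g ≠ 1}, orderOf (u : QuaternionGroup n) = 2 := by
    refine ⟨u0, hu0ord, fun v hv => ?_⟩
    exact Subtype.ext (eq_a_n_of_orderOf_eq_two hn hv)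
  -- conjunct 3
  have conj3 : ∀ u v : {g : QuaternionGroup n // g ≠ 1},
      orderOf (u : QuaternionGroup n) = 2 → ¬ Γ.Adj u v := by
    intro u v hu hadj
    apply And.left hadj
    have huval : (u : QuaternionGroup n) = a (n : ZMod (2*n)) :=
      eq_a_n_of_orderOf_eq_two hn hu
    obtain ⟨t, ht⟩ := hcard
    have hvord : orderOf (v : QuaternionGroup n) ∣ 2 ^ t := by
      rw [← ht, Nat.card_eq_fintype_card]
      exact orderOf_dvd_card
    obtain ⟨m, hmle, hm⟩ := (Nat.dvd_prime_pow Nat.prime_two).mp hvord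
    have hm1 : 1 ≤ m := by
      rcases Nat.eq_zero_or_pos m with h | h
      · exfalso
        rw [h, pow_zero, orderOf_eq_one_iff] at hm
        exact v.2 hm
      · exact h
    have h2m : (2:ℕ) ^ m = 2 ^ (m-1) * 2 := by
      rw [← pow_succ]
      congr 1
      omega
    have hw : orderOf ((v : QuaternionGroup n) ^ (2 ^ (m-1))) = 2 := by
      rw [orderOf_pow, hm, Nat.gcd_eq_right (pow_dvd_pow 2 (by omega)), h2m,
        Nat.mul_div_cancel_left 2 (pow_pos (by norm_num) _)]
    have hwa := eq_a_n_of_orderOf_eq_two hn hw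
    rw [huval, ← hwa]
    exact Subgroup.mem_zpowers_iff.mpr ⟨((2 ^ (m-1) : ℕ) : ℤ), by rw [zpow_natCast]⟩
  -- conjunct 4 : hub reachability
  set h0 : {g : QuaternionGroup n // g ≠ 1} := ⟨xa 0, xa_ne_one 0⟩ with hh0
  have hub : ∀ v : {g : QuaternionGroup n // g ≠ 1},
      orderOf (v : QuaternionGroup n) ≠ 2 → Γ.Reachable h0 v := by
    rintro ⟨g, hg⟩ hord
    cases g with
    | a i =>
        have hi0 : i ≠ 0 := fun h => hg (by rw [h]; rfl)
        have hin : i ≠ (n : ZMod (2*n)) := by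
          rintro rfl
          exact hord (orderOf_a_n hn)
        exact (Adj.reachable (by exact And.intro (key1 i 0 hi0 hin).2 (key1 i 0 hi0 hin).1))
    | xa j =>
        by_cases hj0 : j = 0
        · subst hj0; exact Reachable.refl _
        · by_cases hjn : j = (n : ZMod (2*n))
          · have hmid1 : Γ.Adj h0 ⟨a 1, a_ne_one (one_ne_zero' hn)⟩ := by
              exact And.intro (key1 1 0 (one_ne_zero' hn) (one_ne_n hn)).2
                (key1 1 0 (one_ne_zero' hn) (one_ne_n hn)).1
            have hmid2 : Γ.Adj ⟨a 1, a_ne_one (one_ne_zero' hn)⟩ ⟨xa j, hg⟩ :=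
              And.intro (key1 1 j (one_ne_zero' hn) (one_ne_n hn)).1
                (key1 1 j (one_ne_zero' hn) (one_ne_n hn)).2
            exact (hmid1.reachable).trans hmid2.reachable
          · refine Adj.reachable ?_
            refine And.intro (key2 0 j (fun h => hj0 h.symm) (fun h => ?_))
              (key2 j 0 hj0 (fun h => hjn (by rwa [zero_add] at h)))
            apply hjn
            have hjeq : j = -(n : ZMod (2*n)) := by linear_combination -h
            rw [hjeq, neg_n]
  have conj4 : ∀ u v : {g : QuaternionGroup n // g ≠ 1},
      orderOf (u : QuaternionGroup n) ≠ 2 → orderOf (v : QuaternionGroup n) ≠ 2 →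
      Γ.Reachable u v := fun u v hu hv => (hub u hu).symm.trans (hub v hv)
  refine ⟨?_, conj2, conj3, conj4⟩
  -- card of connected components
  rw [Nat.card_eq_two_iff]
  refine ⟨Γ.connectedComponentMk u0, Γ.connectedComponentMk h0, ?_, ?_⟩
  · intro hcomp
    rw [ConnectedComponent.eq] at hcomp
    have := reach_eq (fun w => conj3 u0 w hu0ord) hcomp
    exact absurd (congrArg Subtype.val this) (by rw [hu0, hh0]; intro h; cases h)
  · rw [Set.eq_univ_iff_forall]
    intro c
    induction c using ConnectedComponent.ind with
    | _ v =>
      simp only [Set.mem_insert_iff, Set.mem_singleton_iff]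
      by_cases hv : orderOf (v : QuaternionGroup n) = 2
      · left
        have : v = u0 := conj2.unique hv hu0ord
        rw [this]
      · right
        rw [ConnectedComponent.eq]
        exact (hub v hv).symm

end QGaux

/-- For `α ≥ 3`, the complement of the proper power graph of the generalized
quaternion group `Q_{2^α}` (of order `2^α`, realized as `QuaternionGroup (2^(α-2))`)
has exactly 2 connected components: the unique element of order 2 is an isolated
vertex forming one component, and all remaining non-identity elements are mutually
reachable, forming the other component. -/
theorem propPowerCompl_quaternion_components (α : ℕ) (hα : 3 ≤ α) :
    Nat.card
        (propPowerCompl (QuaternionGroup (2 ^ (α - 2)))).ConnectedComponent = 2 ∧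
    (∃! u : {g : QuaternionGroup (2 ^ (α - 2)) // g ≠ 1}, orderOf (u : QuaternionGroup (2 ^ (α - 2))) = 2) ∧
    (∀ u v : {g : QuaternionGroup (2 ^ (α - 2)) // g ≠ 1},
      orderOf (u : QuaternionGroup (2 ^ (α - 2))) = 2 →
        ¬ (propPowerCompl (QuaternionGroup (2 ^ (α - 2)))).Adj u v) ∧
    (∀ u v : {g : QuaternionGroup (2 ^ (α - 2)) // g ≠ 1},
      orderOf (u : QuaternionGroup (2 ^ (α - 2))) ≠ 2 →
      orderOf (v : QuaternionGroup (2 ^ (α - 2))) ≠ 2 →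
        (propPowerCompl (QuaternionGroup (2 ^ (α - 2)))).Reachable u v) := by
  have h2 : 2 ≤ 2 ^ (α - 2) := by
    calc 2 = 2 ^ 1 := (pow_one 2).symm
    _ ≤ 2 ^ (α - 2) := Nat.pow_le_pow_right (by norm_num) (by omega)
  haveI : NeZero (2 ^ (α - 2)) := ⟨by omega⟩
  refine QGaux.main (2 ^ (α - 2)) h2 ⟨α, ?_⟩
  rw [Nat.card_eq_fintype_card, QuaternionGroup.card]
  rw [show (4:ℕ) = 2 ^ 2 from rfl, ← pow_add]
  congr 1
  omega
end

section
/- Let p < q be primes with p dividing q − 1, and let G be the nonabelian group of order pq (the semidirect product ℤ/qℤ ⋊ ℤ/pℤ). Then the complement of the proper power graph of G is isomorphic to the join K(q, p−1) + K̄_{q−1}, where K(q, p−1) is the complete q-partite graph whose parts are the sets of non-identity elements of the q Sylow p-subgroups (each of size p − 1), and K̄_{q−1} is the empty graph on the q − 1 elements of order q. -/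
open SimpleGraph

/-- The join of two simple graphs: their disjoint union together with all edges
joining a vertex of the first graph to a vertex of the second. -/
def SimpleGraph.graphJoin {V₁ V₂ : Type*} (G₁ : SimpleGraph V₁) (G₂ : SimpleGraph V₂) :
    SimpleGraph (V₁ ⊕ V₂) where
  Adj u v := match u, v with
    | Sum.inl a, Sum.inl b => G₁.Adj a b
    | Sum.inr a, Sum.inr b => G₂.Adj a b
    | _, _ => True
  symm := ⟨by rintro (a | a) (b | b) h <;> simp_all <;> exact h.symm⟩
  loopless := ⟨by rintro (a | a) h <;> simp_all⟩

set_option linter.unusedVariables false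
set_option linter.unusedSectionVars false
set_option linter.unnecessarySimpa false

section AuxPPC


variable {G : Type*} [Group G] [Finite G]

private lemma ppc_card_ne_aux (α : Type*) [Finite α] (a : α) :
    Nat.card {x : α // x ≠ a} = Nat.card α - 1 := by
  classical
  have h := Nat.card_congr (Equiv.sumCompl (· = a)).symm
  rw [Nat.card_sum] at h
  have h1 : Nat.card {x : α // x = a} = 1 := by
    have : Subsingleton {x : α // x = a} := ⟨by rintro ⟨x, rfl⟩ ⟨y, rfl⟩; rfl⟩
    have : Nonempty {x : α // x = a} := ⟨⟨a, rfl⟩⟩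
    exact Nat.card_unique
  have h2 : Nat.card {x : α // ¬ x = a} = Nat.card {x : α // x ≠ a} := rfl
  omega

private lemma ppc_zpowers_eq {r : ℕ} (hr : r.Prime) {g : G} {H : Subgroup G}
    (hH : Nat.card H = r) (hg : g ∈ H) (hg1 : g ≠ 1) : Subgroup.zpowers g = H := by
  have hle : Subgroup.zpowers g ≤ H := Subgroup.zpowers_le.mpr hg
  have hdvd : Nat.card (Subgroup.zpowers g) ∣ r := hH ▸ Subgroup.card_dvd_of_le hle
  have hne : Nat.card (Subgroup.zpowers g) ≠ 1 := by
    rw [Nat.card_zpowers]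
    exact fun h => hg1 (orderOf_eq_one_iff.mp h)
  have hc : Nat.card (Subgroup.zpowers g) = r :=
    (hr.eq_one_or_self_of_dvd _ hdvd).resolve_left hne
  exact Subgroup.eq_of_le_of_card_ge hle (by rw [hc, hH])

private lemma ppc_mem_dvd {a b : G} (h : a ∈ Subgroup.zpowers b) : orderOf a ∣ orderOf b := by
  rw [← Nat.card_zpowers a, ← Nat.card_zpowers b]
  exact Subgroup.card_dvd_of_le (Subgroup.zpowers_le.mpr h)

private lemma ppc_order_dichotomy {p q : ℕ} (hp : p.Prime) (hq : q.Prime) (hpq : p < q)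
    (hcard : Nat.card G = p * q) (hna : ¬ ∀ a b : G, a * b = b * a)
    {g : G} (hg : g ≠ 1) : orderOf g = p ∨ orderOf g = q := by
  have hd : orderOf g ∣ p * q := hcard ▸ orderOf_dvd_natCard g
  have hne1 : orderOf g ≠ 1 := fun h => hg (orderOf_eq_one_iff.mp h)
  have hnpq : orderOf g ≠ p * q := by
    intro h
    have hcyc : IsCyclic G := isCyclic_of_orderOf_eq_card g (by rw [h, hcard])
    letI := hcyc.commGroup
    exact hna fun a b => mul_comm a b
  by_cases hqd : q ∣ orderOf g
  · by_cases hpd : p ∣ orderOf g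
    · exact absurd (Nat.dvd_antisymm hd
        (((Nat.coprime_primes hp hq).mpr hpq.ne).mul_dvd_of_dvd_of_dvd hpd hqd)) hnpq
    · have hcop : (orderOf g).Coprime p := ((hp.coprime_iff_not_dvd).mpr hpd).symm
      have : orderOf g ∣ q := hcop.dvd_of_dvd_mul_left hd
      exact Or.inr ((hq.eq_one_or_self_of_dvd _ this).resolve_left hne1)
  · have hcop : (orderOf g).Coprime q := ((Nat.Prime.coprime_iff_not_dvd hq).mpr hqd).symm
    have : orderOf g ∣ p := hcop.dvd_of_dvd_mul_right hd
    exact Or.inl ((hp.eq_one_or_self_of_dvd _ this).resolve_left hne1)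

private lemma ppc_unique_q {p q : ℕ} (hp : p.Prime) (hq : q.Prime) (hpq : p < q)
    (hcard : Nat.card G = p * q) {g h : G} (hgo : orderOf g = q) (hho : orderOf h = q) :
    Subgroup.zpowers g = Subgroup.zpowers h := by
  haveI : Fact q.Prime := ⟨hq⟩
  have hfq : (Nat.card G).factorization q = 1 := by
    rw [hcard, Nat.factorization_mul hp.pos.ne' hq.pos.ne']
    simp [hp.factorization, hq.factorization, Finsupp.single_apply, hpq.ne]
  have cg : Nat.card (Subgroup.zpowers g) = q ^ (Nat.card G).factorization q := by
    rw [Nat.card_zpowers, hgo, hfq, pow_one]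
  have ch : Nat.card (Subgroup.zpowers h) = q ^ (Nat.card G).factorization q := by
    rw [Nat.card_zpowers, hho, hfq, pow_one]
  let S1 : Sylow q G := Sylow.ofCard _ cg
  let S2 : Sylow q G := Sylow.ofCard _ ch
  have hS1 : Nat.card (S1 : Subgroup G) = q := by
    show Nat.card (Subgroup.zpowers g) = q
    rw [cg, hfq, pow_one]
  have hidx : (S1 : Subgroup G).index = p := by
    have hh := Subgroup.card_mul_index (S1 : Subgroup G)
    rw [hS1, hcard, mul_comm p q] at hh
    exact Nat.eq_of_mul_eq_mul_left hq.pos hh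
  have hdvd2 : Nat.card (Sylow q G) ∣ p := hidx ▸ Sylow.card_dvd_index S1
  have hmod := card_sylow_modEq_one q G
  have hn1 : Nat.card (Sylow q G) = 1 := by
    rcases (hp.eq_one_or_self_of_dvd _ hdvd2) with h1 | h1
    · exact h1
    · exfalso
      have : p % q = 1 % q := h1 ▸ hmod
      rw [Nat.mod_eq_of_lt hpq, Nat.mod_eq_of_lt hq.one_lt] at this
      exact hp.one_lt.ne' this
  haveI hsub : Subsingleton (Sylow q G) := (Nat.card_eq_one_iff_unique.mp hn1).1
  calc Subgroup.zpowers g = (S1 : Subgroup G) := rfl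
    _ = (S2 : Subgroup G) := by rw [Subsingleton.elim S1 S2]
    _ = Subgroup.zpowers h := rfl

end AuxPPC

set_option maxHeartbeats 1000000 in
/-- Let `p < q` be primes with `p ∣ q − 1` and let `G` be the nonabelian group of
order `pq`. Then the complement of the proper power graph of `G` is isomorphic to the
join `K(q, p−1) + K̄_{q−1}` of the complete `q`-partite graph with parts of size
`p − 1` (the non-identity elements of the `q` Sylow `p`-subgroups) and the edgeless
graph on `q − 1` vertices (the elements of order `q`). -/
theorem propPowerCompl_nonabelian_pq (p q : ℕ) (hp : p.Prime) (hq : q.Prime)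
    (hpq : p < q) (hdvd : p ∣ q - 1) (G : Type*) [Group G] [Finite G]
    (hcard : Nat.card G = p * q) (hna : ¬ ∀ a b : G, a * b = b * a) :
    Nonempty
      ((propPowerCompl G) ≃g
        SimpleGraph.graphJoin
          (completeMultipartiteGraph (fun _ : Fin q => Fin (p - 1)))
          (⊥ : SimpleGraph (Fin (q - 1)))) := by
  classical
  haveI : Fact q.Prime := ⟨hq⟩
  have hdi : ∀ g : G, g ≠ 1 → orderOf g = p ∨ orderOf g = q := fun g hg =>
    ppc_order_dichotomy hp hq hpq hcard hna hg
  let Pr : {g : G // g ≠ 1} → Prop := fun v => orderOf (v : G) = p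
  let P := {v : {g : G // g ≠ 1} // Pr v}
  let T := {v : {g : G // g ≠ 1} // ¬ Pr v}
  have hT : ∀ v : T, orderOf (v.1 : G) = q := fun v => (hdi _ v.1.2).resolve_left v.2
  have hcardP : ∀ u : P, Nat.card (Subgroup.zpowers (u.1 : G)) = p := fun u => by
    rw [Nat.card_zpowers]; exact u.2
  let f : P → Subgroup G := fun u => Subgroup.zpowers (u.1 : G)
  let Q := Set.range f
  let f' : P → Q := fun u => ⟨f u, u, rfl⟩
  haveI : Finite Q := (Set.finite_range f).to_subtype
  have hfib : ∀ c : Q, Nat.card {u : P // f' u = c} = p - 1 := by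
    intro c
    obtain ⟨g₀, hg₀⟩ := c.2
    have hcardc : Nat.card ((c : Subgroup G) : Type _) = p := by
      rw [← hg₀]; exact hcardP g₀
    have e : {u : P // f' u = c} ≃ {x : ((c : Subgroup G) : Type _) // x ≠ 1} :=
      { toFun := fun u => ⟨⟨(u.1.1 : G), by
          have h2 : f u.1 = (c : Subgroup G) := congrArg Subtype.val u.2
          exact h2 ▸ Subgroup.mem_zpowers _⟩,
          fun h => u.1.1.2 (congrArg Subtype.val h)⟩
        invFun := fun x => ⟨⟨⟨(x.1 : G), fun h => x.2 (Subtype.ext h)⟩, by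
          have hz : Subgroup.zpowers ((x.1 : G)) = (c : Subgroup G) :=
            ppc_zpowers_eq hp hcardc x.1.2 (fun h => x.2 (Subtype.ext h))
          show orderOf ((x.1 : G)) = p
          rw [← Nat.card_zpowers, hz, hcardc]⟩, by
          apply Subtype.ext
          show f _ = (c : Subgroup G)
          exact ppc_zpowers_eq hp hcardc x.1.2 (fun h => x.2 (Subtype.ext h))⟩
        left_inv := fun u => rfl
        right_inv := fun x => rfl }
    rw [Nat.card_congr e, ppc_card_ne_aux _ 1, hcardc]
  have hVcard : Nat.card {g : G // g ≠ 1} = p * q - 1 := by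
    rw [ppc_card_ne_aux G 1, hcard]
  have hsplit : Nat.card P + Nat.card T = Nat.card {g : G // g ≠ 1} := by
    have := Nat.card_congr (Equiv.sumCompl Pr)
    rwa [Nat.card_sum] at this
  obtain ⟨g₁, hg₁⟩ := exists_prime_orderOf_dvd_card' (G := G) q
    (by rw [hcard]; exact dvd_mul_left q p)
  have hcardS : Nat.card (Subgroup.zpowers g₁) = q := by rw [Nat.card_zpowers, hg₁]
  have eTS : T ≃ {x : (Subgroup.zpowers g₁) // x ≠ 1} :=
    { toFun := fun v => ⟨⟨(v.1.1 : G), by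
        rw [← ppc_unique_q hp hq hpq hcard (hT v) hg₁]
        exact Subgroup.mem_zpowers _⟩,
        fun h => v.1.2 (congrArg Subtype.val h)⟩
      invFun := fun x => ⟨⟨(x.1 : G), fun h => x.2 (Subtype.ext h)⟩, by
        have hz : Subgroup.zpowers ((x.1 : G)) = Subgroup.zpowers g₁ :=
          ppc_zpowers_eq hq hcardS x.1.2 (fun h => x.2 (Subtype.ext h))
        have ho : orderOf ((x.1 : G)) = q := by
          rw [← Nat.card_zpowers, hz, hcardS]
        show ¬ orderOf ((x.1 : G)) = p
        rw [ho]; exact hpq.ne'⟩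
      left_inv := fun v => rfl
      right_inv := fun x => rfl }
  have hTcard : Nat.card T = q - 1 := by
    rw [Nat.card_congr eTS, ppc_card_ne_aux _ 1, hcardS]
  let efib : ∀ c : Q, {u : P // f' u = c} ≃ Fin (p-1) := fun c =>
    Finite.equivFinOfCardEq (hfib c)
  have hPcard : Nat.card P = Nat.card Q * (p - 1) := by
    have e2 : P ≃ Q × Fin (p-1) :=
      (Equiv.sigmaFiberEquiv f').symm.trans
        ((Equiv.sigmaCongrRight efib).trans (Equiv.sigmaEquivProd Q (Fin (p-1))))
    rw [Nat.card_congr e2, Nat.card_prod]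
    simp
  have hQcard : Nat.card Q = q := by
    have hkey : q * (p - 1) + q = q * p := by
      have h3 : p - 1 + 1 = p := Nat.succ_pred_eq_of_pos hp.pos
      calc q * (p-1) + q = q * ((p-1)+1) := by ring
        _ = q * p := by rw [h3]
    have hm : p * q = q * p := Nat.mul_comm p q
    have hq1 : 1 ≤ q := hq.pos
    have hp2 : 2 ≤ p := hp.two_le
    rw [hVcard, hTcard, hPcard] at hsplit
    obtain ⟨nQ, hn⟩ : ∃ n, n = Nat.card Q := ⟨_, rfl⟩
    rw [← hn] at hsplit ⊢
    have h1 : nQ * (p - 1) = q * (p - 1) := by omega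
    exact Nat.eq_of_mul_eq_mul_right (by omega) h1
  let eQ : Q ≃ Fin q := Finite.equivFinOfCardEq hQcard
  let eT : T ≃ Fin (q-1) := Finite.equivFinOfCardEq hTcard
  let eP : P ≃ (Σ _ : Fin q, Fin (p-1)) :=
    (Equiv.sigmaFiberEquiv f').symm.trans ((Equiv.sigmaCongrRight efib).trans
      ((Equiv.sigmaEquivProd Q (Fin (p-1))).trans ((Equiv.prodCongr eQ (Equiv.refl _)).trans
        (Equiv.sigmaEquivProd (Fin q) (Fin (p-1))).symm)))
  have hP1 : ∀ u : P, (eP u).1 = eQ (f' u) := fun u => rfl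
  let E : {g : G // g ≠ 1} ≃ ((Σ _ : Fin q, Fin (p-1)) ⊕ Fin (q-1)) :=
    (Equiv.sumCompl Pr).symm.trans (Equiv.sumCongr eP eT)
  refine ⟨⟨E, ?_⟩⟩
  intro u v
  have hmemiff : ∀ (a b : {g : G // g ≠ 1}), Pr a → Pr b →
      ((a : G) ∈ Subgroup.zpowers (b : G) ↔
        Subgroup.zpowers (a : G) = Subgroup.zpowers (b : G)) := by
    intro a b ha hb
    constructor
    · intro hm
      exact ppc_zpowers_eq hp (hcardP ⟨b, hb⟩) hm a.2
    · intro he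
      rw [← he]; exact Subgroup.mem_zpowers _
  by_cases hu : Pr u <;> by_cases hv : Pr v
  · have hEu : E u = Sum.inl (eP ⟨u, hu⟩) := by
      simp [E, Equiv.sumCompl_symm_apply_of_pos (p := Pr) hu]
    have hEv : E v = Sum.inl (eP ⟨v, hv⟩) := by
      simp [E, Equiv.sumCompl_symm_apply_of_pos (p := Pr) hv]
    rw [hEu, hEv]
    show (eP ⟨u, hu⟩).1 ≠ (eP ⟨v, hv⟩).1 ↔ _
    rw [hP1, hP1]
    constructor
    · intro hne
      constructor
      · intro hm
        exact hne (congrArg eQ (Subtype.ext ((hmemiff u v hu hv).mp hm)))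
      · intro hm
        exact hne (congrArg eQ (Subtype.ext ((hmemiff v u hv hu).mp hm).symm))
    · rintro ⟨h1, h2⟩ he
      exact h1 ((hmemiff u v hu hv).mpr (Subtype.mk_eq_mk.mp (eQ.injective he)))
  · have hEu : E u = Sum.inl (eP ⟨u, hu⟩) := by
      simp [E, Equiv.sumCompl_symm_apply_of_pos (p := Pr) hu]
    have hEv : E v = Sum.inr (eT ⟨v, hv⟩) := by
      simp [E, Equiv.sumCompl_symm_apply_of_neg (p := Pr) hv]
    rw [hEu, hEv]
    have hou : orderOf (u : G) = p := hu
    have hov : orderOf (v : G) = q := hT ⟨v, hv⟩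
    have h1 : (u : G) ∉ Subgroup.zpowers (v : G) := by
      intro hm
      have hd2 := ppc_mem_dvd hm
      rw [hou, hov] at hd2
      rcases hq.eq_one_or_self_of_dvd p hd2 with h | h
      · exact hp.one_lt.ne' h
      · exact hpq.ne h
    have h2 : (v : G) ∉ Subgroup.zpowers (u : G) := by
      intro hm
      have hd2 := ppc_mem_dvd hm
      rw [hou, hov] at hd2
      exact absurd (Nat.le_of_dvd hp.pos hd2) (not_le.mpr hpq)
    exact iff_of_true trivial ⟨h1, h2⟩
  · have hEu : E u = Sum.inr (eT ⟨u, hu⟩) := by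
      simp [E, Equiv.sumCompl_symm_apply_of_neg (p := Pr) hu]
    have hEv : E v = Sum.inl (eP ⟨v, hv⟩) := by
      simp [E, Equiv.sumCompl_symm_apply_of_pos (p := Pr) hv]
    rw [hEu, hEv]
    have hou : orderOf (u : G) = q := hT ⟨u, hu⟩
    have hov : orderOf (v : G) = p := hv
    have h1 : (u : G) ∉ Subgroup.zpowers (v : G) := by
      intro hm
      have hd2 := ppc_mem_dvd hm
      rw [hou, hov] at hd2
      exact absurd (Nat.le_of_dvd hp.pos hd2) (not_le.mpr hpq)
    have h2 : (v : G) ∉ Subgroup.zpowers (u : G) := by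
      intro hm
      have hd2 := ppc_mem_dvd hm
      rw [hou, hov] at hd2
      rcases hq.eq_one_or_self_of_dvd p hd2 with h | h
      · exact hp.one_lt.ne' h
      · exact hpq.ne h
    exact iff_of_true trivial ⟨h1, h2⟩
  · have hEu : E u = Sum.inr (eT ⟨u, hu⟩) := by
      simp [E, Equiv.sumCompl_symm_apply_of_neg (p := Pr) hu]
    have hEv : E v = Sum.inr (eT ⟨v, hv⟩) := by
      simp [E, Equiv.sumCompl_symm_apply_of_neg (p := Pr) hv]
    rw [hEu, hEv]
    have hou : orderOf (u : G) = q := hT ⟨u, hu⟩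
    have hov : orderOf (v : G) = q := hT ⟨v, hv⟩
    refine iff_of_false ?_ ?_
    · intro h
      have h' : (⊥ : SimpleGraph (Fin (q-1))).Adj (eT ⟨u, hu⟩) (eT ⟨v, hv⟩) := h
      simpa using h'
    · rintro ⟨h1, h2⟩
      apply h1
      rw [← ppc_unique_q hp hq hpq hcard hou hov]
      exact Subgroup.mem_zpowers _
end

section
/- Let G be a finite nontrivial group. The complement of the proper power graph of G is not isomorphic to a path graph P_n for any n ≥ 2, and is not isomorphic to a star graph K_{1,n} for any n ≥ 1. -/
open SimpleGraph

section Aux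

variable {G : Type*} [Group G] [Finite G]

private lemma mem_flip {x y : G} (hmax : ∀ z : G, orderOf z ≤ orderOf x)
    (h : x ∈ Subgroup.zpowers y) : y ∈ Subgroup.zpowers x := by
  have hle : Subgroup.zpowers x ≤ Subgroup.zpowers y := Subgroup.zpowers_le.mpr h
  have heq : Subgroup.zpowers x = Subgroup.zpowers y :=
    Subgroup.eq_of_le_of_card_ge hle (by
      rw [Nat.card_zpowers, Nat.card_zpowers]; exact hmax y)
  rw [heq]; exact Subgroup.mem_zpowers y

private lemma adj_iff {x : G} (hx1 : x ≠ 1) (hmax : ∀ z : G, orderOf z ≤ orderOf x)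
    (u : {g : G // g ≠ 1}) :
    (propPowerCompl G).Adj ⟨x, hx1⟩ u ↔ (u : G) ∉ Subgroup.zpowers x := by
  constructor
  · exact fun h => h.2
  · intro h
    exact ⟨fun hxy => h (mem_flip hmax hxy), h⟩

private lemma degree_eq {x : G} (hx1 : x ≠ 1)
    (hmax : ∀ z : G, orderOf z ≤ orderOf x) :
    Nat.card ((propPowerCompl G).neighborSet ⟨x, hx1⟩) = Nat.card G - orderOf x := by
  classical
  have e : ((propPowerCompl G).neighborSet ⟨x, hx1⟩) ≃ {g : G // g ∉ Subgroup.zpowers x} :=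
    { toFun := fun u => ⟨u.1.1, (adj_iff hx1 hmax u.1).mp u.2⟩
      invFun := fun g => ⟨⟨g.1, fun h => g.2 (by rw [h]; exact Subgroup.one_mem _)⟩,
        (adj_iff hx1 hmax _).mpr g.2⟩
      left_inv := fun u => by ext; rfl
      right_inv := fun g => rfl }
  have : Nat.card G = Nat.card {g : G // g ∈ Subgroup.zpowers x}
      + Nat.card {g : G // g ∉ Subgroup.zpowers x} := by
    cases nonempty_fintype G
    simp only [Nat.card_eq_fintype_card]
    rw [Fintype.card_subtype_compl]
    have hle : Fintype.card {g : G // g ∈ Subgroup.zpowers x} ≤ Fintype.card G :=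
      Fintype.card_subtype_le _
    omega
  have hz : Nat.card {g : G // g ∈ Subgroup.zpowers x} = orderOf x := Nat.card_zpowers x
  rw [Nat.card_congr e]
  omega

end Aux

/-- For a finite nontrivial group `G`, the complement of the proper power graph of
`G` is not isomorphic to a path `P_n` (`n ≥ 2`) and not isomorphic to a star
`K_{1,n}` (`n ≥ 1`). -/
theorem propPowerCompl_not_path_not_star (G : Type*) [Group G] [Finite G]
    [Nontrivial G] :
    (∀ n : ℕ, 2 ≤ n → ¬ Nonempty ((propPowerCompl G) ≃g pathGraph n)) ∧
    (∀ n : ℕ, 1 ≤ n →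
      ¬ Nonempty ((propPowerCompl G) ≃g completeBipartiteGraph (Fin 1) (Fin n))) := by
  classical
  cases nonempty_fintype G
  obtain ⟨x, hmax⟩ := Finite.exists_max (fun g : G => orderOf g)
  obtain ⟨g0, hg0⟩ := exists_ne (1 : G)
  have hordg0 : 2 ≤ orderOf g0 := by
    have h1 : orderOf g0 ≠ 1 := fun h => hg0 (orderOf_eq_one_iff.mp h)
    have h0 : 0 < orderOf g0 := orderOf_pos g0
    omega
  have hord2 : 2 ≤ orderOf x := le_trans hordg0 (hmax g0)
  have hx1 : x ≠ 1 := by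
    intro h; rw [h, orderOf_one] at hord2; omega
  set N := Nat.card G with hN
  have hdvd : orderOf x ∣ N := by
    rw [hN, ← Nat.card_zpowers x]
    exact Subgroup.card_subgroup_dvd_card _
  have hNle : orderOf x ≤ N := Nat.le_of_dvd Nat.card_pos hdvd
  have hcardV : Nat.card {g : G // g ≠ 1} = N - 1 := by
    simp only [hN, Nat.card_eq_fintype_card]
    have h := Fintype.card_subtype_compl (fun g : G => g = 1)
    rw [Fintype.card_subtype_eq (1 : G)] at h
    exact h
  have hne : Nonempty {g : G // g ≠ 1} := ⟨⟨g0, hg0⟩⟩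
  have hN2 : 2 ≤ N := by
    have := Nat.card_pos (α := {g : G // g ≠ 1})
    omega
  set vx : {g : G // g ≠ 1} := ⟨x, hx1⟩ with hvx
  have hdeg : Nat.card ((propPowerCompl G).neighborSet vx) = N - orderOf x :=
    degree_eq hx1 hmax
  constructor
  · -- path case
    rintro n hn ⟨f⟩
    have hcard : N - 1 = n := by
      rw [← hcardV, Nat.card_congr f.toEquiv, Nat.card_eq_fintype_card, Fintype.card_fin]
    -- degree of the image of vx in the path graph
    have hdeg' : Nat.card ((pathGraph n).neighborSet (f vx)) = N - orderOf x := by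
      rw [← Nat.card_congr (f.mapNeighborSet vx), hdeg]
    -- upper bound: every vertex of the path has at most 2 neighbors
    have hub : ∀ a : Fin n, Nat.card ((pathGraph n).neighborSet a) ≤ 2 := by
      intro a
      have hinj : Function.Injective
          (fun b : (pathGraph n).neighborSet a => decide (a.val + 1 = b.1.val)) := by
        rintro ⟨b, hb⟩ ⟨c, hc⟩ h
        rw [SimpleGraph.mem_neighborSet, pathGraph_adj] at hb hc
        simp only at h
        apply Subtype.ext; apply Fin.ext
        by_cases hb' : a.val + 1 = b.val <;> by_cases hc' : a.val + 1 = c.val <;>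
          simp [hb', hc'] at h ⊢ <;> omega
      calc Nat.card ((pathGraph n).neighborSet a)
          ≤ Nat.card Bool := Nat.card_le_card_of_injective _ hinj
        _ = 2 := by simp [Nat.card_eq_fintype_card]
    -- lower bound: every vertex of the path has at least one neighbor (n ≥ 2)
    have hlb : ∀ a : Fin n, 1 ≤ Nat.card ((pathGraph n).neighborSet a) := by
      intro a
      have : Nonempty ((pathGraph n).neighborSet a) := by
        by_cases h : a.val + 1 < n
        · exact ⟨⟨⟨a.val + 1, h⟩, by rw [SimpleGraph.mem_neighborSet, pathGraph_adj]; left; rfl⟩⟩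
        · have ha : 1 ≤ a.val := by omega
          exact ⟨⟨⟨a.val - 1, by omega⟩, by
            rw [SimpleGraph.mem_neighborSet, pathGraph_adj]; right; simp; omega⟩⟩
      exact Nat.one_le_iff_ne_zero.mpr (Nat.card_ne_zero.mpr ⟨this, inferInstance⟩)
    have h1 := hub (f vx)
    have h2 := hlb (f vx)
    rw [hdeg'] at h1 h2
    -- so N - orderOf x ∈ {1, 2}
    have hdvd2 : orderOf x ∣ N - orderOf x := Nat.dvd_sub hdvd dvd_rfl
    rcases (by omega : N - orderOf x = 1 ∨ N - orderOf x = 2) with hcase | hcase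
    · rw [hcase] at hdvd2
      have := Nat.le_of_dvd one_pos hdvd2
      omega
    · -- orderOf x = 2, N = 4, n = 3; endpoint has degree ≤ 1 but should have degree 2
      rw [hcase] at hdvd2
      have hx2 : orderOf x = 2 := by
        have := Nat.le_of_dvd (by omega) hdvd2
        omega
      have hN4 : N = 4 := by omega
      have hn3 : n = 3 := by omega
      -- endpoint vertex
      set a0 : Fin n := ⟨0, by omega⟩ with ha0
      set u0 : {g : G // g ≠ 1} := f.symm a0 with hu0
      have hy2 : orderOf (u0 : G) = 2 := by
        have h1 : orderOf (u0 : G) ≠ 1 := fun h => u0.2 (orderOf_eq_one_iff.mp h)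
        have h0 : 0 < orderOf (u0 : G) := orderOf_pos _
        have := hmax (u0 : G)
        omega
      have hmax' : ∀ z : G, orderOf z ≤ orderOf (u0 : G) := by
        intro z; rw [hy2, ← hx2]; exact hmax z
      have hdegu : Nat.card ((propPowerCompl G).neighborSet u0) = N - 2 := by
        have h := degree_eq u0.2 hmax'
        rw [hy2] at h
        exact h
      have hfu0 : f u0 = a0 := by rw [hu0]; exact RelIso.apply_symm_apply f a0
      have hdegu' : Nat.card ((pathGraph n).neighborSet a0) = N - 2 := by
        rw [← hfu0, ← Nat.card_congr (f.mapNeighborSet u0)]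
        exact hdegu
      -- but the endpoint a0 has at most one neighbor
      have hubend : Nat.card ((pathGraph n).neighborSet a0) ≤ 1 := by
        have hinj : Function.Injective
            (fun _ : (pathGraph n).neighborSet a0 => ()) := by
          rintro ⟨b, hb⟩ ⟨c, hc⟩ _
          rw [SimpleGraph.mem_neighborSet, pathGraph_adj] at hb hc
          have hav : (a0 : ℕ) = 0 := rfl
          rw [hav] at hb hc
          have hbc : b = c := by
            apply Fin.ext
            rcases hb with hb | hb <;> rcases hc with hc | hc <;> omega
          exact Subtype.ext hbc
        calc Nat.card ((pathGraph n).neighborSet a0)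
            ≤ Nat.card Unit := Nat.card_le_card_of_injective _ hinj
          _ = 1 := by simp
      omega
  · -- star case
    rintro n hn ⟨f⟩
    have hcard : N - 1 = 1 + n := by
      rw [← hcardV, Nat.card_congr f.toEquiv, Nat.card_eq_fintype_card]
      simp
    have hNn : N = n + 2 := by omega
    have hdeg' : Nat.card ((completeBipartiteGraph (Fin 1) (Fin n)).neighborSet (f vx))
        = N - orderOf x := by
      rw [← Nat.card_congr (f.mapNeighborSet vx), hdeg]
    -- neighbor set cards in the star
    have hcenter : ∀ i : Fin 1,
        (completeBipartiteGraph (Fin 1) (Fin n)).neighborSet (Sum.inl i)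
          = Set.range Sum.inr := by
      intro i
      ext b; cases b <;> simp [SimpleGraph.mem_neighborSet]
    have hleaf : ∀ j : Fin n,
        (completeBipartiteGraph (Fin 1) (Fin n)).neighborSet (Sum.inr j)
          = Set.range Sum.inl := by
      intro j
      ext b; cases b <;> simp [SimpleGraph.mem_neighborSet]
    have hdvd2 : orderOf x ∣ N - orderOf x := Nat.dvd_sub hdvd dvd_rfl
    rcases hfv : f vx with i | j
    · -- f vx is the center: N - orderOf x = n, so orderOf x = 2
      rw [hfv, hcenter i] at hdeg'
      have hcr : Nat.card (Set.range (Sum.inr : Fin n → Fin 1 ⊕ Fin n)) = n := by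
        rw [Nat.card_range_of_injective Sum.inr_injective, Nat.card_eq_fintype_card,
          Fintype.card_fin]
      rw [hcr] at hdeg'
      have hx2 : orderOf x = 2 := by omega
      -- a leaf vertex: its degree in the graph is N - 2 = n, but in the star it is 1
      set a0 : Fin 1 ⊕ Fin n := Sum.inr ⟨0, by omega⟩ with ha0
      set u0 : {g : G // g ≠ 1} := f.symm a0 with hu0
      have hy2 : orderOf (u0 : G) = 2 := by
        have h1 : orderOf (u0 : G) ≠ 1 := fun h => u0.2 (orderOf_eq_one_iff.mp h)
        have h0 : 0 < orderOf (u0 : G) := orderOf_pos _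
        have := hmax (u0 : G)
        omega
      have hmax' : ∀ z : G, orderOf z ≤ orderOf (u0 : G) := by
        intro z; rw [hy2, ← hx2]; exact hmax z
      have hdegu : Nat.card ((propPowerCompl G).neighborSet u0) = N - 2 := by
        have h := degree_eq u0.2 hmax'
        rw [hy2] at h
        exact h
      have hfu0 : f u0 = a0 := by rw [hu0]; exact RelIso.apply_symm_apply f a0
      have hdegu' :
          Nat.card ((completeBipartiteGraph (Fin 1) (Fin n)).neighborSet a0) = N - 2 := by
        rw [← hfu0, ← Nat.card_congr (f.mapNeighborSet u0)]
        exact hdegu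
      rw [ha0, hleaf] at hdegu'
      have hcl : Nat.card (Set.range (Sum.inl : Fin 1 → Fin 1 ⊕ Fin n)) = 1 := by
        rw [Nat.card_range_of_injective Sum.inl_injective, Nat.card_eq_fintype_card,
          Fintype.card_fin]
      rw [hcl] at hdegu'
      -- N = 3 but orderOf x = 2 divides N
      rw [hx2] at hdvd2
      omega
    · -- f vx is a leaf: N - orderOf x = 1
      rw [hfv, hleaf j] at hdeg'
      have hcl : Nat.card (Set.range (Sum.inl : Fin 1 → Fin 1 ⊕ Fin n)) = 1 := by
        rw [Nat.card_range_of_injective Sum.inl_injective, Nat.card_eq_fintype_card,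
          Fintype.card_fin]
      rw [hcl] at hdeg'
      rw [← hdeg'] at hdvd2
      have := Nat.le_of_dvd (by omega) hdvd2
      omega
end

section
/- Let G be a finite group and n ≥ 3. The complement of the proper power graph of G is isomorphic to the cycle graph C_n if and only if n = 3 and G is isomorphic to ℤ/2ℤ × ℤ/2ℤ. -/
open SimpleGraph

lemma propPowerCompl_adj {G : Type*} [Group G] (u v : {g : G // g ≠ 1}) :
    (propPowerCompl G).Adj u v ↔
      ((u : G) ∉ Subgroup.zpowers (v : G) ∧ (v : G) ∉ Subgroup.zpowers (u : G)) :=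
  Iff.rfl

/-- If `v` has order dividing 2, membership in `zpowers v` is very restricted. -/
lemma mem_zpowers_of_sq {G : Type*} [Group G] {u v : G} (hv : v * v = 1)
    (h : u ∈ Subgroup.zpowers v) : u = 1 ∨ u = v := by
  obtain ⟨k, rfl⟩ := h
  have hv2 : v ^ (2 : ℤ) = 1 := by
    rw [show (2:ℤ) = 1 + 1 by ring, zpow_add, zpow_one, hv]
  rcases Int.even_or_odd k with ⟨m, hm⟩ | ⟨m, hm⟩
  · left
    show v ^ k = 1
    rw [hm, show m + m = 2 * m by ring, zpow_mul, hv2, one_zpow]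
  · right
    show v ^ k = v
    rw [hm, zpow_add, zpow_one, zpow_mul, hv2, one_zpow, one_mul]

/-- If every element squares to 1, the complement of the proper power graph is complete. -/
lemma propPowerCompl_eq_top {G : Type*} [Group G] (h : ∀ g : G, g * g = 1) :
    propPowerCompl G = ⊤ := by
  ext u v
  rw [propPowerCompl_adj, top_adj]
  constructor
  · rintro ⟨h1, _⟩ rfl
    exact h1 (Subgroup.mem_zpowers _)
  · intro huv
    constructor
    · intro hm
      rcases mem_zpowers_of_sq (h v) hm with h1 | h1
      · exact u.2 h1
      · exact huv (Subtype.ext h1)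
    · intro hm
      rcases mem_zpowers_of_sq (h u) hm with h1 | h1
      · exact v.2 h1
      · exact huv (Subtype.ext h1.symm)

lemma propPowerCompl_adj_of_ne {G : Type*} [Group G] (h : ∀ g : G, g * g = 1)
    {u v : {g : G // g ≠ 1}} (huv : u ≠ v) : (propPowerCompl G).Adj u v := by
  rw [propPowerCompl_eq_top h]
  exact huv

open Fin.CommRing in
lemma klein_of_propPowerCompl_cycle {G : Type*} [Group G] [Finite G] {n : ℕ}
    (hn : 3 ≤ n) (e : (propPowerCompl G) ≃g cycleGraph n) :
    n = 3 ∧ IsKleinFour G := by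
  classical
  haveI : Fintype G := Fintype.ofFinite G
  obtain ⟨m, rfl⟩ : ∃ m, n = m + 1 + 2 := ⟨n - 3, by omega⟩
  -- cardinality
  have hcard : Fintype.card {g : G // g ≠ 1} = m + 1 + 2 := by
    rw [Fintype.card_congr e.toEquiv, Fintype.card_fin]
  have hpos : 0 < Fintype.card G := Fintype.card_pos
  have hcardG : Fintype.card G = m + 1 + 2 + 1 := by
    have h1 := Fintype.card_subtype_compl (fun g : G => g = 1)
    rw [Fintype.card_subtype_eq (1 : G)] at h1
    have h2 : Fintype.card {g : G // g ≠ 1} = Fintype.card G - 1 := h1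
    omega
  -- every element squares to 1
  have hsq : ∀ g : G, g * g = 1 := by
    by_contra hx
    push_neg at hx
    obtain ⟨x, hx⟩ := hx
    have hx1 : x ≠ 1 := by rintro rfl; simp at hx
    have hxi1 : x⁻¹ ≠ 1 := by simpa using hx1
    have hxx : x ≠ x⁻¹ := fun h => hx (by nth_rewrite 2 [h]; simp)
    set u : {g : G // g ≠ 1} := ⟨x, hx1⟩
    set v : {g : G // g ≠ 1} := ⟨x⁻¹, hxi1⟩
    have huv : u ≠ v := fun h => hxx (congrArg Subtype.val h)
    have hnb : ∀ w, (propPowerCompl G).Adj u w ↔ (propPowerCompl G).Adj v w := by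
      intro w
      rw [propPowerCompl_adj, propPowerCompl_adj]
      show (x ∉ _ ∧ _ ∉ Subgroup.zpowers x) ↔ (x⁻¹ ∉ _ ∧ _ ∉ Subgroup.zpowers x⁻¹)
      rw [Subgroup.zpowers_inv, inv_mem_iff]
    set a : Fin (m + 1 + 2) := e u with ha
    set b : Fin (m + 1 + 2) := e v with hb
    have hab : a ≠ b := fun h => huv (e.toEquiv.injective h)
    have hnb' : ∀ w : Fin (m + 1 + 2),
        (cycleGraph (m + 1 + 2)).Adj a w ↔ (cycleGraph (m + 1 + 2)).Adj b w := by
      intro w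
      have h1 : (cycleGraph (m + 1 + 2)).Adj a w ↔
          (propPowerCompl G).Adj u (e.symm w) := by
        rw [← e.map_adj_iff]
        simp [ha]
      have h2 : (cycleGraph (m + 1 + 2)).Adj b w ↔
          (propPowerCompl G).Adj v (e.symm w) := by
        rw [← e.map_adj_iff]
        simp [hb]
      rw [h1, h2, hnb]
    -- use neighbors of a
    have key1 := (hnb' (a + 1)).mp (by rw [cycleGraph_adj]; right; ring)
    have key2 := (hnb' (a - 1)).mp (by rw [cycleGraph_adj]; left; ring)
    rw [cycleGraph_adj] at key1 key2
    have hb1 : b = a + 2 := by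
      rcases key1 with h | h
      · linear_combination h
      · exact absurd (by linear_combination -h : b = a).symm hab
    have hb2 : b = a - 2 := by
      rcases key2 with h | h
      · exact absurd (by linear_combination h : b = a).symm hab
      · linear_combination -h
    have h4 : ((4 : ℕ) : Fin (m + 1 + 2)) = 0 := by
      push_cast
      linear_combination hb2 - hb1
    have hdvd : m + 1 + 2 ∣ 4 := Fin.natCast_eq_zero.mp h4
    have hle : m + 1 + 2 ≤ 4 := Nat.le_of_dvd (by norm_num) hdvd
    have hub : m ≤ 1 := by omega
    have hm1 : m = 1 := by
      interval_cases m
      · norm_num at hdvd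
      · rfl
    subst hm1
    -- now |G| = 5, every non-identity element generates G
    have hG5 : Fintype.card G = 5 := by omega
    have hgen : ∀ y : G, y ≠ 1 → Subgroup.zpowers y = ⊤ := by
      intro y hy
      have hdvd5 : orderOf y ∣ 5 := hG5 ▸ orderOf_dvd_card
      have h5 : Nat.Prime 5 := by norm_num
      rcases (Nat.dvd_prime h5).mp hdvd5 with h | h
      · exact absurd (orderOf_eq_one_iff.mp h) hy
      · apply Subgroup.eq_top_of_card_eq
        rw [Nat.card_zpowers, h, Nat.card_eq_fintype_card, hG5]
    -- but the cycle graph C4 has an edge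
    have hadj : (cycleGraph (1 + 1 + 2)).Adj 0 1 := by decide
    have := e.symm.map_adj_iff.mpr hadj
    rw [propPowerCompl_adj] at this
    exact this.1 (by rw [hgen _ (e.symm 1).2]; trivial)
  -- the graph is complete, so n = 3
  have hm0 : m = 0 := by
    have hw0 : (0 : Fin (m + 1 + 2)) ≠ ((2 : ℕ) : Fin (m + 1 + 2)) := by
      intro h
      have hval := congrArg Fin.val h
      rw [Fin.val_zero, Fin.val_natCast, Nat.mod_eq_of_lt (by omega)] at hval
      omega
    have hadj : (cycleGraph (m + 1 + 2)).Adj 0 ((2 : ℕ) : Fin (m + 1 + 2)) := by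
      have h1 : (propPowerCompl G).Adj (e.symm 0) (e.symm ((2 : ℕ) : Fin (m + 1 + 2))) :=
        propPowerCompl_adj_of_ne hsq (fun h => hw0 (by simpa using congrArg e h))
      simpa using e.map_adj_iff.mpr h1
    rw [cycleGraph_adj] at hadj
    rcases hadj with h | h
    · have h3 : ((3 : ℕ) : Fin (m + 1 + 2)) = 0 := by
        push_cast at h ⊢
        linear_combination -h
      have := Nat.le_of_dvd (by norm_num) (Fin.natCast_eq_zero.mp h3)
      omega
    · have h1 : ((1 : ℕ) : Fin (m + 1 + 2)) = 0 := by
        push_cast at h ⊢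
        linear_combination h
      have := Nat.le_of_dvd (by norm_num) (Fin.natCast_eq_zero.mp h1)
      omega
  subst hm0
  refine ⟨rfl, ?_⟩
  have hcard4 : Nat.card G = 4 := by
    rw [Nat.card_eq_fintype_card, hcardG]
  have hexp : Monoid.exponent G = 2 := by
    have hdvd : Monoid.exponent G ∣ 2 :=
      Monoid.exponent_dvd_of_forall_pow_eq_one fun g => by rw [pow_two]; exact hsq g
    rcases (Nat.dvd_prime Nat.prime_two).mp hdvd with h | h
    · exfalso
      have hall : ∀ g : G, g = 1 := fun g => by
        have := Monoid.pow_exponent_eq_one g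
        rwa [h, pow_one] at this
      have : Fintype.card G ≤ 1 :=
        Fintype.card_le_one_iff.mpr fun a b => by rw [hall a, hall b]
      omega
    · exact h
  exact ⟨hcard4, hexp⟩

/-- For a finite group `G` and `n ≥ 3`, the complement of the proper power graph of
`G` is isomorphic to the cycle `C_n` iff `n = 3` and `G ≅ ℤ/2ℤ × ℤ/2ℤ`. -/
theorem propPowerCompl_cycle_iff (G : Type*) [Group G] [Finite G] (n : ℕ)
    (hn : 3 ≤ n) :
    Nonempty ((propPowerCompl G) ≃g cycleGraph n) ↔
      n = 3 ∧ Nonempty (G ≃* Multiplicative (ZMod 2 × ZMod 2)) := by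
  constructor
  · rintro ⟨e⟩
    obtain ⟨rfl, hK⟩ := klein_of_propPowerCompl_cycle hn e
    exact ⟨rfl, IsKleinFour.nonempty_mulEquiv⟩
  · rintro ⟨rfl, ⟨φ⟩⟩
    classical
    haveI : Fintype G := Fintype.ofFinite G
    have hK : IsKleinFour G :=
      { card_four := by rw [Nat.card_congr φ.toEquiv]; simp [Nat.card_eq_fintype_card]
        exponent_two := by rw [Monoid.exponent_eq_of_mulEquiv φ]; simp }
    have hsq : ∀ g : G, g * g = 1 := by
      intro g
      have := Monoid.pow_exponent_eq_one g
      rwa [hK.exponent_two, pow_two] at this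
    have hc : Fintype.card {g : G // g ≠ 1} = 3 := by
      have h4 : Fintype.card G = 4 := by
        have := hK.card_four; rwa [Nat.card_eq_fintype_card] at this
      have := Fintype.card_subtype_compl (fun g : G => g = 1)
      rw [Fintype.card_subtype_eq (1 : G), h4] at this
      exact this
    have equiv3 : {g : G // g ≠ 1} ≃ Fin 3 :=
      Fintype.equivFinOfCardEq hc
    refine ⟨?_⟩
    rw [propPowerCompl_eq_top hsq, cycleGraph_three_eq_top]
    exact Iso.completeGraph equiv3
end

section
/- Let G be a finite nontrivial group. The complement of the proper power graph of G does not contain K_{1,4} as a subgraph (equivalently, every vertex has degree at most 3) if and only if G is isomorphic to a cyclic group ℤ/p^nℤ for a prime p and n ≥ 1, to ℤ/6ℤ, or to ℤ/2ℤ × ℤ/2ℤ. -/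
open SimpleGraph

namespace PPCAux

open Subgroup

variable {G : Type*} [Group G]

/-- The `K_{1,4}` condition. -/
def HasK14 (G : Type*) [Group G] : Prop :=
  ∃ c w₁ w₂ w₃ w₄ : {g : G // g ≠ 1},
    w₁ ≠ w₂ ∧ w₁ ≠ w₃ ∧ w₁ ≠ w₄ ∧ w₂ ≠ w₃ ∧ w₂ ≠ w₄ ∧ w₃ ≠ w₄ ∧
    (propPowerCompl G).Adj c w₁ ∧ (propPowerCompl G).Adj c w₂ ∧
    (propPowerCompl G).Adj c w₃ ∧ (propPowerCompl G).Adj c w₄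

lemma mem_zpowers_iff_exists_fin [Fintype G] (a b : G) :
    a ∈ zpowers b ↔ ∃ k : Fin (Fintype.card G), b ^ (k : ℕ) = a := by
  constructor
  · intro h
    rw [← (isOfFinOrder_of_finite b).mem_powers_iff_mem_zpowers] at h
    obtain ⟨n, hn⟩ := h
    refine ⟨⟨n % Fintype.card G, Nat.mod_lt _ Fintype.card_pos⟩, ?_⟩
    simpa [← Nat.mod_mod_of_dvd n orderOf_dvd_card, pow_mod_orderOf] using hn
  · rintro ⟨k, rfl⟩
    exact ⟨(k : ℕ), by simp [zpow_natCast]⟩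

instance decidableMemZpowers [Fintype G] [DecidableEq G] (a b : G) :
    Decidable (a ∈ zpowers b) :=
  decidable_of_iff _ (mem_zpowers_iff_exists_fin a b).symm

instance [Fintype G] [DecidableEq G] : DecidableRel (propPowerCompl G).Adj := fun u v =>
  inferInstanceAs (Decidable (((u : G) ∉ zpowers (v : G)) ∧ (v : G) ∉ zpowers (u : G)))

instance [Fintype G] [DecidableEq G] : Decidable (HasK14 G) :=
  inferInstanceAs (Decidable (∃ _ : {g : G // g ≠ 1}, _))

lemma noK14_klein : ¬ HasK14 (Multiplicative (ZMod 2 × ZMod 2)) := by decide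

set_option maxRecDepth 10000 in
lemma noK14_zmod6 : ¬ HasK14 (Multiplicative (ZMod 6)) := by decide

lemma gcd_dvd_gcd_aux {n d1 d2 : ℕ} (hn : n ≠ 0) (hd1 : d1 ∣ n) (hd2 : d2 ∣ n)
    (h : n / d1 ∣ n / d2) : d2 ∣ d1 := by
  have h1 : 0 < n / d1 := Nat.div_pos (Nat.le_of_dvd (Nat.pos_of_ne_zero hn) hd1)
    (Nat.pos_of_dvd_of_pos hd1 (Nat.pos_of_ne_zero hn))
  have key : d2 * (n / d1) ∣ d1 * (n / d1) := by
    rw [Nat.mul_div_cancel' hd1]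
    calc d2 * (n / d1) ∣ d2 * (n / d2) := Nat.mul_dvd_mul_left d2 h
    _ = n := Nat.mul_div_cancel' hd2
  exact (Nat.mul_dvd_mul_iff_right h1).mp key

lemma mem_zpowers_of_orderOf_dvd [Finite G] [IsCyclic G] {a b : G}
    (h : orderOf a ∣ orderOf b) : a ∈ zpowers b := by
  obtain ⟨g, hg⟩ := IsCyclic.exists_generator (α := G)
  obtain ⟨i, hi⟩ := (isOfFinOrder_of_finite g).mem_powers_iff_mem_zpowers.mpr (hg a)
  obtain ⟨j, hj⟩ := (isOfFinOrder_of_finite g).mem_powers_iff_mem_zpowers.mpr (hg b)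
  set n := orderOf g with hn
  have hn0 : n ≠ 0 := (orderOf_pos g).ne'
  subst hi hj
  rw [orderOf_pow, orderOf_pow] at h
  have hdvd : Nat.gcd n j ∣ Nat.gcd n i :=
    gcd_dvd_gcd_aux hn0 (Nat.gcd_dvd_left n i) (Nat.gcd_dvd_left n j) h
  have hbez : g ^ (Nat.gcd n j : ℤ) ∈ zpowers (g ^ j) := by
    rw [Nat.gcd_eq_gcd_ab n j]
    rw [zpow_add, zpow_mul, zpow_mul]
    have : (g : G) ^ (n : ℤ) = 1 := by
      rw [zpow_natCast, pow_orderOf_eq_one]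
    rw [this, one_zpow, one_mul]
    exact ⟨Nat.gcdB n j, by rw [← zpow_natCast g j]⟩
  have hmem : g ^ Nat.gcd n j ∈ zpowers (g ^ j) := by
    rwa [zpow_natCast] at hbez
  have heq : g ^ i = (g ^ Nat.gcd n j) ^ (i / Nat.gcd n j) := by
    rw [← pow_mul, Nat.mul_div_cancel' (hdvd.trans (Nat.gcd_dvd_right n i))]
  show g ^ i ∈ zpowers (g ^ j)
  rw [heq]
  exact pow_mem hmem _

lemma mem_zpowers_iff_orderOf_dvd [Finite G] [IsCyclic G] {a b : G} :
    a ∈ zpowers b ↔ orderOf a ∣ orderOf b :=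
  ⟨orderOf_dvd_of_mem_zpowers, mem_zpowers_of_orderOf_dvd⟩

/-- Convenient constructor for `HasK14`. -/
lemma hasK14_mk {x y₁ y₂ y₃ y₄ : G} (hx : x ≠ 1)
    (h1 : y₁ ≠ 1) (h2 : y₂ ≠ 1) (h3 : y₃ ≠ 1) (h4 : y₄ ≠ 1)
    (h12 : y₁ ≠ y₂) (h13 : y₁ ≠ y₃) (h14 : y₁ ≠ y₄)
    (h23 : y₂ ≠ y₃) (h24 : y₂ ≠ y₄) (h34 : y₃ ≠ y₄)
    (a1 : y₁ ∉ zpowers x ∧ x ∉ zpowers y₁)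
    (a2 : y₂ ∉ zpowers x ∧ x ∉ zpowers y₂)
    (a3 : y₃ ∉ zpowers x ∧ x ∉ zpowers y₃)
    (a4 : y₄ ∉ zpowers x ∧ x ∉ zpowers y₄) : HasK14 G :=
  ⟨⟨x, hx⟩, ⟨y₁, h1⟩, ⟨y₂, h2⟩, ⟨y₃, h3⟩, ⟨y₄, h4⟩,
    fun h => h12 (congrArg Subtype.val h), fun h => h13 (congrArg Subtype.val h),
    fun h => h14 (congrArg Subtype.val h), fun h => h23 (congrArg Subtype.val h),
    fun h => h24 (congrArg Subtype.val h), fun h => h34 (congrArg Subtype.val h),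
    ⟨a1.2, a1.1⟩, ⟨a2.2, a2.1⟩, ⟨a3.2, a3.1⟩, ⟨a4.2, a4.1⟩⟩

/-- `HasK14` transfers along group isomorphisms. -/
lemma HasK14.of_mulEquiv {H : Type*} [Group H] (e : G ≃* H) (h : HasK14 G) : HasK14 H := by
  obtain ⟨c, w₁, w₂, w₃, w₄, h12, h13, h14, h23, h24, h34, a1, a2, a3, a4⟩ := h
  have hne : ∀ g : G, g ≠ 1 → e g ≠ 1 := fun g hg h' => hg (e.injective (by simpa using h'))
  have hmem : ∀ u v : G, e u ∈ zpowers (e v) → u ∈ zpowers v := by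
    rintro u v ⟨k, hk⟩
    exact ⟨k, e.injective (by simpa using hk)⟩
  have hadj : ∀ u v : {g : G // g ≠ 1}, (propPowerCompl G).Adj u v →
      (propPowerCompl H).Adj ⟨e u, hne _ u.2⟩ ⟨e v, hne _ v.2⟩ := fun u v huv =>
    ⟨fun hm => huv.1 (hmem _ _ hm), fun hm => huv.2 (hmem _ _ hm)⟩
  have hinj : ∀ u v : {g : G // g ≠ 1}, u ≠ v →
      (⟨e u, hne _ u.2⟩ : {g : H // g ≠ 1}) ≠ ⟨e v, hne _ v.2⟩ := fun u v huv h' =>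
    huv (Subtype.ext (e.injective (congrArg Subtype.val h')))
  exact ⟨⟨e c, hne _ c.2⟩, ⟨e w₁, hne _ w₁.2⟩, ⟨e w₂, hne _ w₂.2⟩, ⟨e w₃, hne _ w₃.2⟩,
    ⟨e w₄, hne _ w₄.2⟩, hinj _ _ h12, hinj _ _ h13, hinj _ _ h14, hinj _ _ h23,
    hinj _ _ h24, hinj _ _ h34, hadj _ _ a1, hadj _ _ a2, hadj _ _ a3, hadj _ _ a4⟩

lemma exists_four_distinct {α : Type*} [DecidableEq α] (s : Finset α) (h : 4 ≤ s.card) :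
    ∃ a ∈ s, ∃ b ∈ s, ∃ c ∈ s, ∃ d ∈ s, a ≠ b ∧ a ≠ c ∧ a ≠ d ∧ b ≠ c ∧ b ≠ d ∧ c ≠ d := by
  obtain ⟨a, ha⟩ := Finset.card_pos.mp (show 0 < s.card by omega)
  have h2 : 3 ≤ (s.erase a).card := by
    rw [Finset.card_erase_of_mem ha]; omega
  obtain ⟨b, hb⟩ := Finset.card_pos.mp (show 0 < (s.erase a).card by omega)
  have h3 : 2 ≤ ((s.erase a).erase b).card := by
    rw [Finset.card_erase_of_mem hb]; omega
  obtain ⟨c, hc⟩ := Finset.card_pos.mp (show 0 < ((s.erase a).erase b).card by omega)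
  have h4 : 1 ≤ (((s.erase a).erase b).erase c).card := by
    rw [Finset.card_erase_of_mem hc]; omega
  obtain ⟨d, hd⟩ := Finset.card_pos.mp h4
  have hd' := Finset.mem_of_mem_erase hd
  have hc' := Finset.mem_of_mem_erase hc
  have hb' := Finset.mem_of_mem_erase hb
  refine ⟨a, ha, b, Finset.mem_of_mem_erase hb, c, Finset.mem_of_mem_erase hc',
    d, Finset.mem_of_mem_erase (Finset.mem_of_mem_erase hd'), ?_, ?_, ?_, ?_, ?_, ?_⟩
  · exact fun h => (Finset.mem_erase.mp hb).1 h.symm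
  · exact fun h => (Finset.mem_erase.mp hc').1 h.symm
  · exact fun h => (Finset.mem_erase.mp (Finset.mem_of_mem_erase hd')).1 h.symm
  · exact fun h => (Finset.mem_erase.mp hc).1 h.symm
  · exact fun h => (Finset.mem_erase.mp hd').1 h.symm
  · exact fun h => (Finset.mem_erase.mp hd).1 h.symm


section Cyclic

variable [Finite G] [IsCyclic G]

lemma not_hasK14_of_prime_pow {p k : ℕ} (hp : p.Prime) (hcard : Nat.card G = p ^ k) :
    ¬ HasK14 G := by
  rintro ⟨c, w₁, w₂, w₃, w₄, h12, h13, h14, h23, h24, h34, a1, a2, a3, a4⟩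
  obtain ⟨i, hi, hoc⟩ := (Nat.dvd_prime_pow hp).1 (hcard ▸ orderOf_dvd_natCard (c : G))
  obtain ⟨j, hj, how⟩ := (Nat.dvd_prime_pow hp).1 (hcard ▸ orderOf_dvd_natCard (w₁ : G))
  rcases le_total i j with hle | hle
  · exact a1.1 (mem_zpowers_of_orderOf_dvd (by rw [hoc, how]; exact pow_dvd_pow p hle))
  · exact a1.2 (mem_zpowers_of_orderOf_dvd (by rw [hoc, how]; exact pow_dvd_pow p hle))

lemma hasK14_of_card12 (hcard : Nat.card G = 12) : HasK14 G := by
  obtain ⟨g, hg⟩ := IsCyclic.exists_generator (α := G)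
  have hord : orderOf g = 12 := (orderOf_eq_card_of_forall_mem_zpowers hg).trans hcard
  have hx : orderOf (g ^ 3) = 4 := by rw [orderOf_pow, hord]; decide
  have hy : orderOf (g ^ 4) = 3 := by rw [orderOf_pow, hord]; decide
  have hz : orderOf (g ^ 2) = 6 := by rw [orderOf_pow, hord]; decide
  have hy' : orderOf (g ^ 4)⁻¹ = 3 := by rw [orderOf_inv, hy]
  have hz' : orderOf (g ^ 2)⁻¹ = 6 := by rw [orderOf_inv, hz]
  have hne1 : ∀ u : G, orderOf u ≠ 1 → u ≠ 1 := fun u hu h => hu (by rw [h, orderOf_one])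
  have hadj : ∀ u v : G, ¬ (orderOf u ∣ orderOf v) → u ∉ zpowers v := fun u v h hm =>
    h (orderOf_dvd_of_mem_zpowers hm)
  have hyy : (g ^ 4) ≠ (g ^ 4)⁻¹ := by
    intro h
    have h2 : (g ^ 4) ^ 2 = 1 := by rw [pow_two]; nth_rewrite 2 [h]; exact mul_inv_cancel _
    have := orderOf_dvd_iff_pow_eq_one.mpr h2
    rw [hy] at this; norm_num at this
  have hzz : (g ^ 2) ≠ (g ^ 2)⁻¹ := by
    intro h
    have h2 : (g ^ 2) ^ 2 = 1 := by rw [pow_two]; nth_rewrite 2 [h]; exact mul_inv_cancel _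
    have := orderOf_dvd_iff_pow_eq_one.mpr h2
    rw [hz] at this; norm_num at this
  have hord_ne : ∀ u v : G, orderOf u ≠ orderOf v → u ≠ v := fun u v h hm => h (by rw [hm])
  refine hasK14_mk (x := g ^ 3) (y₁ := g ^ 4) (y₂ := (g ^ 4)⁻¹) (y₃ := g ^ 2)
    (y₄ := (g ^ 2)⁻¹) (hne1 _ (by rw [hx]; norm_num)) (hne1 _ (by rw [hy]; norm_num))
    (hne1 _ (by rw [hy']; norm_num)) (hne1 _ (by rw [hz]; norm_num))
    (hne1 _ (by rw [hz']; norm_num)) hyy (hord_ne _ _ (by rw [hy, hz]; norm_num))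
    (hord_ne _ _ (by rw [hy, hz']; norm_num)) (hord_ne _ _ (by rw [hy', hz]; norm_num))
    (hord_ne _ _ (by rw [hy', hz']; norm_num)) hzz ?_ ?_ ?_ ?_
  · exact ⟨hadj _ _ (by rw [hy, hx]; norm_num), hadj _ _ (by rw [hy, hx]; norm_num)⟩
  · exact ⟨hadj _ _ (by rw [hy', hx]; norm_num), hadj _ _ (by rw [hy', hx]; norm_num)⟩
  · exact ⟨hadj _ _ (by rw [hz, hx]; norm_num), hadj _ _ (by rw [hz, hx]; norm_num)⟩
  · exact ⟨hadj _ _ (by rw [hz', hx]; norm_num), hadj _ _ (by rw [hz', hx]; norm_num)⟩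

lemma ordCompl_le_four (h : ¬ HasK14 G) {p : ℕ} (hp : p.Prime)
    (hdvd : p ∣ Nat.card G) : ordCompl[p] (Nat.card G) ≤ 4 := by
  classical
  by_contra h5
  push_neg at h5
  set n := Nat.card G with hn
  have hn0 : n ≠ 0 := Nat.card_pos.ne'
  haveI := Fact.mk hp
  obtain ⟨x, hx⟩ := exists_prime_orderOf_dvd_card' p hdvd
  obtain ⟨g, hg⟩ := IsCyclic.exists_generator (α := G)
  have hord : orderOf g = n := orderOf_eq_card_of_forall_mem_zpowers hg
  set k := p ^ n.factorization p with hk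
  set m := ordCompl[p] n with hm
  have hkm : k * m = n := Nat.ordProj_mul_ordCompl_eq_self n p
  have hkpos : 0 < k := pow_pos hp.pos _
  have hordh : orderOf (g ^ k) = m := by
    rw [orderOf_pow, hord, Nat.gcd_eq_right ⟨m, hkm.symm⟩, ← hkm,
      Nat.mul_div_cancel_left m hkpos]
  letI := Fintype.ofFinite G
  set s : Finset G := (Finset.univ.filter (fun y => y ∈ zpowers (g ^ k))).erase 1 with hs
  have hfiltercard : (Finset.univ.filter (fun y => y ∈ zpowers (g ^ k))).card = m := by
    rw [← Fintype.card_subtype, ← Nat.card_eq_fintype_card, Nat.card_zpowers, hordh]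
  have hscard : 4 ≤ s.card := by
    rw [hs, Finset.card_erase_of_mem (by simp [one_mem]), hfiltercard]
    omega
  obtain ⟨a, ha, b, hb, c, hc, d, hd, hab, hac, had, hbc, hbd, hcd⟩ :=
    exists_four_distinct s hscard
  have hmem : ∀ y : G, y ∈ s → y ≠ 1 ∧ y ∈ zpowers (g ^ k) := by
    intro y hy
    rw [hs, Finset.mem_erase, Finset.mem_filter] at hy
    exact ⟨hy.1, hy.2.2⟩
  have hpm : ¬ p ∣ m := Nat.not_dvd_ordCompl hp hn0
  have hadj : ∀ y : G, y ∈ s → (y ∉ zpowers x ∧ x ∉ zpowers y) := by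
    intro y hy
    obtain ⟨hy1, hyz⟩ := hmem y hy
    have hym : orderOf y ∣ m := hordh ▸ orderOf_dvd_of_mem_zpowers hyz
    constructor
    · intro hmem'
      have := orderOf_dvd_of_mem_zpowers hmem'
      rw [hx] at this
      rcases (Nat.dvd_prime hp).mp this with h1 | h1
      · exact hy1 (orderOf_eq_one_iff.mp h1)
      · exact hpm (h1 ▸ hym)
    · intro hmem'
      have := orderOf_dvd_of_mem_zpowers hmem'
      rw [hx] at this
      exact hpm (this.trans hym)
  have hx1 : x ≠ 1 := fun h => hp.one_lt.ne' (by rw [← hx, h, orderOf_one])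
  exact h (hasK14_mk hx1 (hmem a ha).1 (hmem b hb).1 (hmem c hc).1 (hmem d hd).1
    hab hac had hbc hbd hcd (hadj a ha) (hadj b hb) (hadj c hc) (hadj d hd))

end Cyclic

section NonCyclic

variable [Finite G]

lemma card_le_six [Nontrivial G] (h : ¬ HasK14 G) (hc : ¬ IsCyclic G) : Nat.card G ≤ 6 := by
  classical
  obtain ⟨x, hmax⟩ := Finite.exists_max (fun y : G => orderOf y)
  have hx1 : x ≠ 1 := by
    obtain ⟨g, hg⟩ := exists_ne (1 : G)
    intro h1
    have := hmax g
    rw [h1, orderOf_one] at this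
    exact hg (orderOf_eq_one_iff.mp (Nat.le_antisymm this (orderOf_pos g)))
  have key : ∀ y : G, y ∉ zpowers x → x ∉ zpowers y := by
    intro y hy hmem
    have hdvd := orderOf_dvd_of_mem_zpowers hmem
    have heq : orderOf x = orderOf y :=
      Nat.le_antisymm (Nat.le_of_dvd (orderOf_pos y) hdvd) (hmax y)
    have hle : zpowers x ≤ zpowers y := (zpowers_le).mpr hmem
    have : zpowers x = zpowers y := Subgroup.eq_of_le_of_card_ge hle
      (by rw [Nat.card_zpowers, Nat.card_zpowers, heq])
    exact hy (this ▸ mem_zpowers y)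
  letI := Fintype.ofFinite G
  set s : Finset G := Finset.univ.filter (fun y => y ∉ zpowers x) with hs
  have hscard : s.card ≤ 3 := by
    by_contra h4
    push_neg at h4
    obtain ⟨a, ha, b, hb, c, hc, d, hd, hab, hac, had, hbc, hbd, hcd⟩ :=
      exists_four_distinct s (by omega)
    have hmem : ∀ y : G, y ∈ s → y ∉ zpowers x := by
      intro y hy; rw [hs, Finset.mem_filter] at hy; exact hy.2
    have hne1 : ∀ y : G, y ∈ s → y ≠ 1 := fun y hy h1 => hmem y hy (h1 ▸ one_mem _)
    exact h (hasK14_mk hx1 (hne1 a ha) (hne1 b hb) (hne1 c hc) (hne1 d hd)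
      hab hac had hbc hbd hcd ⟨hmem a ha, key a (hmem a ha)⟩ ⟨hmem b hb, key b (hmem b hb)⟩
      ⟨hmem c hc, key c (hmem c hc)⟩ ⟨hmem d hd, key d (hmem d hd)⟩)
  have hcardsplit : (Finset.univ.filter (fun y : G => y ∈ zpowers x)).card + s.card
      = Fintype.card G := by
    rw [hs]
    exact Finset.card_filter_add_card_filter_not _
  have hzcard : (Finset.univ.filter (fun y : G => y ∈ zpowers x)).card = orderOf x := by
    rw [← Fintype.card_subtype, ← Nat.card_eq_fintype_card, Nat.card_zpowers]
  have hbound : Nat.card G ≤ orderOf x + 3 := by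
    rw [Nat.card_eq_fintype_card, ← hcardsplit, hzcard]
    omega
  have hdvd : orderOf x ∣ Nat.card G := orderOf_dvd_natCard x
  have hne : orderOf x ≠ Nat.card G := fun h' => hc (isCyclic_of_orderOf_eq_card x h')
  obtain ⟨t, ht⟩ := hdvd
  have ht0 : t ≠ 0 := by
    intro h0; rw [h0, Nat.mul_zero] at ht; exact Nat.card_pos.ne' ht
  have ht1 : t ≠ 1 := by
    intro h1; rw [h1, Nat.mul_one] at ht; exact hne ht.symm
  have h2t : 2 ≤ t := by omega
  have : 2 * orderOf x ≤ Nat.card G := by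
    rw [ht, Nat.mul_comm]
    exact Nat.mul_le_mul (le_refl (orderOf x)) h2t
  omega

lemma klein_of_card4 (hc : ¬ IsCyclic G) (hcard : Nat.card G = 4) :
    Nonempty (G ≃* Multiplicative (ZMod 2 × ZMod 2)) := by
  haveI : Nontrivial G := Finite.one_lt_card_iff_nontrivial.mp (by rw [hcard]; norm_num)
  have hexp : ∀ g : G, g ≠ 1 → orderOf g = 2 := by
    intro g hg
    have h4 : orderOf g ∣ 2 ^ 2 := by
      have hh := orderOf_dvd_natCard g
      rw [hcard] at hh
      exact (by norm_num : (4:ℕ) = 2^2) ▸ hh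
    obtain ⟨i, hi, hgi⟩ := (Nat.dvd_prime_pow Nat.prime_two).1 h4
    interval_cases i
    · rw [pow_zero] at hgi
      exact absurd (orderOf_eq_one_iff.mp hgi) hg
    · rw [pow_one] at hgi; exact hgi
    · exfalso
      exact hc (isCyclic_of_orderOf_eq_card g (by rw [hgi, hcard]; norm_num))
  haveI : IsKleinFour G := ⟨hcard, (Monoid.exponent_eq_prime_iff Nat.prime_two).mpr hexp⟩
  exact IsKleinFour.nonempty_mulEquiv

lemma hasK14_of_card6 (hc : ¬ IsCyclic G) (hcard : Nat.card G = 6) : HasK14 G := by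
  haveI := Fact.mk Nat.prime_two
  haveI := Fact.mk Nat.prime_three
  obtain ⟨a, ha⟩ := exists_prime_orderOf_dvd_card' 2 (by rw [hcard]; norm_num)
  obtain ⟨b, hb⟩ := exists_prime_orderOf_dvd_card' 3 (by rw [hcard]; norm_num)
  have hza : ∀ u : G, u ∈ zpowers a → u = 1 ∨ u = a := by
    rintro u ⟨k, rfl⟩
    show a ^ k = 1 ∨ a ^ k = a
    have hmod := zpow_mod_orderOf a k
    rw [ha] at hmod
    rw [show ((2:ℕ):ℤ) = 2 by norm_num] at hmod
    rcases Int.emod_two_eq_zero_or_one k with h | h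
    · left; rw [← hmod, h, zpow_zero]
    · right; rw [← hmod, h, zpow_one]
  have ha1 : a ≠ 1 := fun h => by rw [h, orderOf_one] at ha; norm_num at ha
  have hb1 : b ≠ 1 := fun h => by rw [h, orderOf_one] at hb; norm_num at hb
  have hbinv : orderOf b⁻¹ = 3 := by rw [orderOf_inv, hb]
  have hbinv1 : b⁻¹ ≠ 1 := fun h => by rw [h, orderOf_one] at hbinv; norm_num at hbinv
  have hanb : a ∉ zpowers b := by
    intro h
    have := orderOf_dvd_of_mem_zpowers h
    rw [ha, hb] at this
    norm_num at this
  have hbna : b ∉ zpowers a := by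
    intro h
    rcases hza b h with h1 | h1
    · exact hb1 h1
    · rw [h1, ha] at hb; norm_num at hb
  have hbinvna : b⁻¹ ∉ zpowers a := by
    intro h
    rcases hza b⁻¹ h with h1 | h1
    · exact hbinv1 h1
    · rw [h1, ha] at hbinv; norm_num at hbinv
  have hanbinv : a ∉ zpowers b⁻¹ := by
    intro h
    have := orderOf_dvd_of_mem_zpowers h
    rw [ha, hbinv] at this
    norm_num at this
  have key : ∀ c : G, orderOf c = 3 → a ∉ zpowers (a * c) ∧ a * c ∉ zpowers a ∧ a * c ≠ 1 := by
    intro c hc3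
    have hc1 : c ≠ 1 := fun h => by rw [h, orderOf_one] at hc3; norm_num at hc3
    have hmul1 : a * c ≠ 1 := by
      intro h
      have hceq : c = a⁻¹ := by
        rw [← one_mul c, ← inv_mul_cancel a, mul_assoc, h, mul_one]
      rw [hceq, orderOf_inv, ha] at hc3
      norm_num at hc3
    refine ⟨?_, ?_, hmul1⟩
    · intro hmem
      have hcmem : c ∈ zpowers (a * c) := by
        have hrw : c = a⁻¹ * (a * c) := by group
        have h' := mul_mem (inv_mem hmem) (mem_zpowers (a * c))
        rwa [inv_mul_cancel_left] at h'
      have h2 : 2 ∣ orderOf (a * c) := ha ▸ orderOf_dvd_of_mem_zpowers hmem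
      have h3 : 3 ∣ orderOf (a * c) := hc3 ▸ orderOf_dvd_of_mem_zpowers hcmem
      have h6 : orderOf (a * c) ∣ 6 := hcard ▸ orderOf_dvd_natCard _
      have h66 : (6:ℕ) ∣ orderOf (a * c) :=
        Nat.Coprime.mul_dvd_of_dvd_of_dvd (by norm_num) h2 h3
      exact hc (isCyclic_of_orderOf_eq_card _ (by rw [Nat.dvd_antisymm h6 h66, hcard]))
    · intro hmem
      rcases hza _ hmem with h1 | h1
      · exact hmul1 h1
      · exact hc1 (mul_eq_left.mp h1)
  obtain ⟨k1, k2, k3⟩ := key b hb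
  obtain ⟨l1, l2, l3⟩ := key b⁻¹ hbinv
  have hbb : b ≠ b⁻¹ := by
    intro h
    have h2 : b ^ 2 = 1 := by rw [pow_two]; nth_rewrite 2 [h]; exact mul_inv_cancel _
    have := orderOf_dvd_iff_pow_eq_one.mpr h2
    rw [hb] at this; norm_num at this
  refine hasK14_mk (x := a) (y₁ := b) (y₂ := b⁻¹) (y₃ := a * b) (y₄ := a * b⁻¹)
    ha1 hb1 hbinv1 k3 l3 hbb ?_ ?_ ?_ ?_ ?_
    ⟨hbna, hanb⟩ ⟨hbinvna, hanbinv⟩ ⟨k2, k1⟩ ⟨l2, l1⟩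
  · intro h
    exact ha1 (mul_eq_right.mp h.symm)
  · intro h
    apply hanb
    have hbbq : a = b * b := by
      have h2 := congrArg (fun z => z * b) h
      rw [inv_mul_cancel_right] at h2
      exact h2.symm
    rw [hbbq]
    exact mul_mem (mem_zpowers b) (mem_zpowers b)
  · intro h
    apply hanb
    have hbbq : a = b⁻¹ * b⁻¹ := by
      have h2 := congrArg (fun z => z * b⁻¹) h
      rw [mul_inv_cancel_right] at h2
      exact h2.symm
    rw [hbbq]
    exact mul_mem (inv_mem (mem_zpowers b)) (inv_mem (mem_zpowers b))
  · intro h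
    exact ha1 (mul_eq_right.mp h.symm)
  · intro h
    exact hbb (mul_left_cancel h)

end NonCyclic

lemma arith {n : ℕ} (h2 : 2 ≤ n)
    (h : ∀ p : ℕ, p.Prime → p ∣ n → ordCompl[p] n ≤ 4)
    (hnpp : ¬ ∃ p k : ℕ, p.Prime ∧ n = p ^ k) : n = 6 ∨ n = 12 := by
  have hn0 : n ≠ 0 := by omega
  set p := n.minFac with hpdef
  have hp : p.Prime := Nat.minFac_prime (by omega)
  have hpd : p ∣ n := Nat.minFac_dvd n
  set m := ordCompl[p] n with hmdef
  have hm0 : m ≠ 0 := (Nat.ordCompl_pos p hn0).ne'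
  have hm1 : m ≠ 1 := by
    intro h1
    apply hnpp
    refine ⟨p, n.factorization p, hp, ?_⟩
    have := Nat.ordProj_mul_ordCompl_eq_self n p
    rw [← hmdef, h1, Nat.mul_one] at this
    exact this.symm
  set q := m.minFac with hqdef
  have hq : q.Prime := Nat.minFac_prime hm1
  have hqm : q ∣ m := Nat.minFac_dvd m
  have hqn : q ∣ n := hqm.trans (Nat.ordCompl_dvd n p)
  have hqp : q ≠ p := by
    intro hEq
    apply Nat.not_dvd_ordCompl hp hn0
    rw [← hmdef]
    exact hEq ▸ hqm
  have hpq : p ≤ q := Nat.minFac_le_of_dvd hq.two_le hqn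
  have hm4 : m ≤ 4 := h p hp hpd
  have hqle : q ≤ 4 := (Nat.le_of_dvd (Nat.pos_of_ne_zero hm0) hqm).trans hm4
  have hq3 : q = 3 := by
    have := hq.two_le
    have hp2 := hp.two_le
    interval_cases q
    · omega
    · rfl
    · exact absurd hq (by norm_num)
  have hp2 : p = 2 := by
    have hge := hp.two_le
    have hpne3 : p ≠ 3 := fun hh => hqp (hq3.trans hh.symm)
    omega
  have hm3 : m = 3 := by
    rw [hq3] at hqm
    rcases hqm with ⟨t, ht⟩
    interval_cases m <;> omega
  -- n = 2 ^ a * 3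
  set a := n.factorization 2 with hadef
  have hna : 2 ^ a * 3 = n := by
    have := Nat.ordProj_mul_ordCompl_eq_self n p
    rw [← hmdef, hm3, hp2] at this
    exact this
  have h3n : (3:ℕ) ∣ n := by rw [← hna]; exact ⟨2^a, by ring⟩
  have hc3 : ordCompl[3] n ≤ 4 := h 3 Nat.prime_three h3n
  have hcompl3 : ordCompl[3] n = 2 ^ a := by
    rw [← hna, Nat.ordCompl_mul]
    have h1 : (2 ^ a).factorization 3 = 0 := by
      apply Nat.factorization_eq_zero_of_not_dvd
      intro hdd
      have := Nat.Prime.dvd_of_dvd_pow (p := 3) Nat.prime_three hdd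
      norm_num at this
    have h2' : (3:ℕ).factorization 3 = 1 := Nat.Prime.factorization_self Nat.prime_three
    rw [h1, h2', pow_zero, Nat.div_one, pow_one, Nat.div_self (by norm_num)]
    ring
  have ha2 : 2 ^ a ≤ 4 := by rw [← hcompl3]; exact hc3
  have ha0 : a ≠ 0 := by
    have : (2:ℕ) ∣ n := hp2 ▸ hpd
    intro h0
    rw [h0, pow_zero, one_mul] at hna
    omega
  have haa : a = 1 ∨ a = 2 := by
    rcases Nat.lt_or_ge a 3 with h' | h'
    · omega
    · exfalso
      have : 2 ^ 3 ≤ 2 ^ a := Nat.pow_le_pow_right (by norm_num) h'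
      norm_num at this
      omega
  rcases haa with h' | h'
  · left; rw [← hna, h']; norm_num
  · right; rw [← hna, h']; norm_num

end PPCAux

/-- For a finite nontrivial group `G`, the complement of the proper power graph of
`G` contains no `K_{1,4}` subgraph (no vertex adjacent to four other distinct
vertices) iff `G ≅ ℤ/p^nℤ` (`p` prime, `n ≥ 1`), `G ≅ ℤ/6ℤ`, or
`G ≅ ℤ/2ℤ × ℤ/2ℤ`. -/
theorem propPowerCompl_no_K14_iff (G : Type*) [Group G] [Finite G] [Nontrivial G] :
    (¬ ∃ c w₁ w₂ w₃ w₄ : {g : G // g ≠ 1},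
        w₁ ≠ w₂ ∧ w₁ ≠ w₃ ∧ w₁ ≠ w₄ ∧ w₂ ≠ w₃ ∧ w₂ ≠ w₄ ∧ w₃ ≠ w₄ ∧
        (propPowerCompl G).Adj c w₁ ∧ (propPowerCompl G).Adj c w₂ ∧
        (propPowerCompl G).Adj c w₃ ∧ (propPowerCompl G).Adj c w₄) ↔
      ((∃ p n : ℕ, p.Prime ∧ 1 ≤ n ∧ Nonempty (G ≃* Multiplicative (ZMod (p ^ n)))) ∨
        Nonempty (G ≃* Multiplicative (ZMod 6)) ∨
        Nonempty (G ≃* Multiplicative (ZMod 2 × ZMod 2))) := by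
  show ¬ PPCAux.HasK14 G ↔ _
  constructor
  · intro h
    have h2 : 2 ≤ Nat.card G := Finite.one_lt_card
    by_cases hc : IsCyclic G
    · by_cases hpp : ∃ p k : ℕ, p.Prime ∧ Nat.card G = p ^ k
      · obtain ⟨p, k, hp, hn⟩ := hpp
        have hk : 1 ≤ k := by
          by_contra hk0
          push_neg at hk0
          interval_cases k
          rw [pow_zero] at hn
          omega
        exact Or.inl ⟨p, k, hp, hk, hn ▸ ⟨(zmodCyclicMulEquiv hc).symm⟩⟩
      · have harith := PPCAux.arith h2
          (fun p hp hd => PPCAux.ordCompl_le_four h hp hd)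
          (by simpa using hpp)
        rcases harith with h6 | h12
        · exact Or.inr (Or.inl (h6 ▸ ⟨(zmodCyclicMulEquiv hc).symm⟩))
        · exact absurd (PPCAux.hasK14_of_card12 h12) h
    · have hle := PPCAux.card_le_six h hc
      have hcases : Nat.card G = 2 ∨ Nat.card G = 3 ∨ Nat.card G = 4 ∨
          Nat.card G = 5 ∨ Nat.card G = 6 := by omega
      rcases hcases with h' | h' | h' | h' | h'
      · haveI := Fact.mk Nat.prime_two
        exact absurd (isCyclic_of_prime_card h') hc
      · haveI := Fact.mk Nat.prime_three
        exact absurd (isCyclic_of_prime_card h') hc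
      · exact Or.inr (Or.inr (PPCAux.klein_of_card4 hc h'))
      · haveI := Fact.mk (by norm_num : Nat.Prime 5)
        exact absurd (isCyclic_of_prime_card h') hc
      · exact absurd (PPCAux.hasK14_of_card6 hc h') h
  · rintro (⟨p, k, hp, hk, ⟨e⟩⟩ | ⟨e⟩ | ⟨e⟩) <;> intro hK
    · haveI := Fact.mk hp
      haveI : IsCyclic G := isCyclic_of_surjective e.symm e.symm.surjective
      have hcard : Nat.card G = p ^ k := by
        rw [Nat.card_congr (e.toEquiv.trans Multiplicative.toAdd), Nat.card_zmod]
      exact PPCAux.not_hasK14_of_prime_pow hp hcard hK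
    · obtain ⟨e'⟩ := e
      exact PPCAux.noK14_zmod6 (PPCAux.HasK14.of_mulEquiv e' hK)
    · obtain ⟨e'⟩ := e
      exact PPCAux.noK14_klein (PPCAux.HasK14.of_mulEquiv e' hK)
end

section
/- Let G be a finite nontrivial group. The complement of the proper power graph of G does not contain K_{2,3} as a subgraph if and only if G is isomorphic to a cyclic group ℤ/p^nℤ for a prime p and n ≥ 1, to ℤ/2ℤ × ℤ/2ℤ, or to a cyclic group ℤ/2pℤ for an odd prime p. -/
open SimpleGraph

namespace PPC

open Subgroup

variable {G : Type*} [Group G]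

/-- The `K_{2,3}` subgraph existence statement. -/
def K23 (G : Type*) [Group G] : Prop :=
  ∃ u₁ u₂ w₁ w₂ w₃ : {g : G // g ≠ 1},
    u₁ ≠ u₂ ∧ w₁ ≠ w₂ ∧ w₁ ≠ w₃ ∧ w₂ ≠ w₃ ∧
    (propPowerCompl G).Adj u₁ w₁ ∧ (propPowerCompl G).Adj u₁ w₂ ∧
    (propPowerCompl G).Adj u₁ w₃ ∧ (propPowerCompl G).Adj u₂ w₁ ∧
    (propPowerCompl G).Adj u₂ w₂ ∧ (propPowerCompl G).Adj u₂ w₃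

/-- Incomparability of two group elements. -/
def Inc (x y : G) : Prop := x ∉ zpowers y ∧ y ∉ zpowers x

lemma k23_intro {x₁ x₂ y₁ y₂ y₃ : G} (hx₁ : x₁ ≠ 1) (hx₂ : x₂ ≠ 1) (hy₁ : y₁ ≠ 1)
    (hy₂ : y₂ ≠ 1) (hy₃ : y₃ ≠ 1) (hx : x₁ ≠ x₂) (h12 : y₁ ≠ y₂) (h13 : y₁ ≠ y₃)
    (h23 : y₂ ≠ y₃)
    (a11 : Inc x₁ y₁) (a12 : Inc x₁ y₂) (a13 : Inc x₁ y₃)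
    (a21 : Inc x₂ y₁) (a22 : Inc x₂ y₂) (a23 : Inc x₂ y₃) :
    K23 G :=
  ⟨⟨x₁, hx₁⟩, ⟨x₂, hx₂⟩, ⟨y₁, hy₁⟩, ⟨y₂, hy₂⟩, ⟨y₃, hy₃⟩,
    fun h => hx (congrArg Subtype.val h), fun h => h12 (congrArg Subtype.val h),
    fun h => h13 (congrArg Subtype.val h), fun h => h23 (congrArg Subtype.val h),
    And.intro a11.1 a11.2, And.intro a12.1 a12.2, And.intro a13.1 a13.2,
    And.intro a21.1 a21.2, And.intro a22.1 a22.2, And.intro a23.1 a23.2⟩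

lemma inc_of_orderOf {x y : G} (h1 : ¬ orderOf x ∣ orderOf y) (h2 : ¬ orderOf y ∣ orderOf x) :
    Inc x y :=
  ⟨fun h => h1 (orderOf_dvd_of_mem_zpowers h), fun h => h2 (orderOf_dvd_of_mem_zpowers h)⟩

lemma mem_zpowers_of_sq {t g : G} (ht : t ^ 2 = 1) (h : g ∈ zpowers t) : g = 1 ∨ g = t := by
  rw [mem_zpowers_iff] at h
  obtain ⟨k, rfl⟩ := h
  have h2 : t ^ (2 : ℤ) = 1 := by rw [show ((2:ℤ)) = ((2:ℕ):ℤ) from rfl, zpow_natCast, ht]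
  have hk : t ^ k = t ^ (k % 2) := by
    conv_lhs => rw [← Int.emod_add_mul_ediv k 2]
    rw [zpow_add, zpow_mul, h2, one_zpow, mul_one]
  rcases Int.emod_two_eq_zero_or_one k with h0 | h1
  · left; rw [hk, h0, zpow_zero]
  · right; rw [hk, h1, zpow_one]

lemma inc_invol {s t : G} (hs : s ^ 2 = 1) (ht : t ^ 2 = 1) (hs1 : s ≠ 1) (ht1 : t ≠ 1)
    (hne : s ≠ t) : Inc s t := by
  constructor
  · intro h
    rcases mem_zpowers_of_sq ht h with h' | h'
    · exact hs1 h'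
    · exact hne h'
  · intro h
    rcases mem_zpowers_of_sq hs h with h' | h'
    · exact ht1 h'
    · exact hne h'.symm


lemma mem_zpowers_of_orderOf_dvd [Finite G] [IsCyclic G] {x y : G}
    (h : orderOf x ∣ orderOf y) : x ∈ zpowers y := by
  classical
  cases nonempty_fintype G
  have hn : 0 < orderOf y := orderOf_pos y
  have hle := IsCyclic.card_pow_eq_one_le (α := G) hn
  have hsub : ((zpowers y : Subgroup G) : Set G).toFinset ⊆
      ({a : G | a ^ orderOf y = 1} : Finset G) := by
    intro a ha
    simp only [Set.mem_toFinset, SetLike.mem_coe] at ha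
    simp only [Finset.mem_filter, Finset.mem_univ, true_and]
    exact orderOf_dvd_iff_pow_eq_one.mp (orderOf_dvd_of_mem_zpowers ha)
  have hcard : ((zpowers y : Subgroup G) : Set G).toFinset.card = orderOf y := by
    simp [Set.toFinset_card, Fintype.card_zpowers]
  have heq : ((zpowers y : Subgroup G) : Set G).toFinset =
      ({a : G | a ^ orderOf y = 1} : Finset G) :=
    Finset.eq_of_subset_of_card_le hsub (by rw [hcard]; exact hle)
  have hx : x ∈ ({a : G | a ^ orderOf y = 1} : Finset G) := by
    simp only [Finset.mem_filter, Finset.mem_univ, true_and]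
    exact orderOf_dvd_iff_pow_eq_one.mp h
  rw [← heq] at hx
  simpa using hx

lemma exists_orderOf_eq_dvd [Finite G] [IsCyclic G] {d : ℕ} (hd : d ∣ Nat.card G) :
    ∃ x : G, orderOf x = d := by
  obtain ⟨g, hg⟩ := IsCyclic.exists_ofOrder_eq_natCard (α := G)
  have hn0 : Nat.card G ≠ 0 := Nat.card_pos.ne'
  refine ⟨g ^ (Nat.card G / d), ?_⟩
  rw [orderOf_pow, hg, Nat.gcd_eq_right (Nat.div_dvd_of_dvd hd), Nat.div_div_self hd hn0]


-- helpers about elements with given order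
lemma ne_one_of_orderOf {x : G} {d : ℕ} (h : orderOf x = d) (hd : d ≠ 1) : x ≠ 1 := by
  intro h1; rw [h1, orderOf_one] at h; exact hd h.symm

lemma ne_inv_of_orderOf {x : G} {d : ℕ} (h : orderOf x = d) (hd : ¬ d ∣ 2) : x ≠ x⁻¹ := by
  intro h1
  have : x ^ 2 = 1 := by rw [pow_two]; nth_rewrite 2 [h1]; rw [mul_inv_cancel]
  exact hd (h ▸ orderOf_dvd_iff_pow_eq_one.mpr this)




lemma pow_ne_pow {b : G} {r i j : ℕ} (hb : orderOf b = r) (hij : i < j) (hjr : j - i < r) :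
    b ^ i ≠ b ^ j := by
  intro h
  have hm := pow_eq_pow_iff_modEq.mp h
  rw [hb] at hm
  have hd := (Nat.modEq_iff_dvd' (le_of_lt hij)).mp hm
  have := Nat.le_of_dvd (by omega) hd
  omega

lemma ne_of_orderOf_ne {x y : G} (h : orderOf x ≠ orderOf y) : x ≠ y :=
  fun he => h (he ▸ rfl)


section Cyclic
variable [Finite G] [IsCyclic G]

lemma k23_two_odd {q r : ℕ} (hq : q.Prime) (hr : r.Prime)
    (hq2 : q ≠ 2) (hr5 : 5 ≤ r) (hqr : q ≠ r) (hqd : q ∣ Nat.card G) (hrd : r ∣ Nat.card G) :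
    K23 G := by
  obtain ⟨a, ha⟩ := exists_orderOf_eq_dvd hqd
  obtain ⟨b, hb⟩ := exists_orderOf_eq_dvd hrd
  have hq3 : 3 ≤ q := by have := hq.two_le; omega
  have ha' : orderOf a⁻¹ = q := by rw [orderOf_inv, ha]
  have hco2 : Nat.gcd r 2 = 1 := (Nat.coprime_primes hr Nat.prime_two).mpr (by omega)
  have hco3 : Nat.gcd r 3 = 1 := (Nat.coprime_primes hr (by norm_num)).mpr (by omega)
  have hb2 : orderOf (b ^ 2) = r := by rw [orderOf_pow, hb, hco2, Nat.div_one]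
  have hb3 : orderOf (b ^ 3) = r := by rw [orderOf_pow, hb, hco3, Nat.div_one]
  have hinc : ∀ u v : G, orderOf u = q → orderOf v = r → Inc u v := by
    intro u v hu hv
    refine inc_of_orderOf ?_ ?_
    · rw [hu, hv]; exact fun h => hqr ((Nat.prime_dvd_prime_iff_eq hq hr).mp h)
    · rw [hu, hv]; exact fun h => hqr ((Nat.prime_dvd_prime_iff_eq hr hq).mp h).symm
  refine k23_intro (x₁ := a) (x₂ := a⁻¹) (y₁ := b) (y₂ := b ^ 2) (y₃ := b ^ 3)
    (ne_one_of_orderOf ha (by omega)) (ne_one_of_orderOf ha' (by omega))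
    (ne_one_of_orderOf hb (by omega)) (ne_one_of_orderOf hb2 (by omega))
    (ne_one_of_orderOf hb3 (by omega))
    (ne_inv_of_orderOf ha (fun h => by have := Nat.le_of_dvd (by norm_num) h; omega))
    (by simpa using pow_ne_pow hb (i := 1) (j := 2) (by norm_num) (by omega))
    (by simpa using pow_ne_pow hb (i := 1) (j := 3) (by norm_num) (by omega))
    (pow_ne_pow hb (i := 2) (j := 3) (by norm_num) (by omega))
    (hinc _ _ ha hb) (hinc _ _ ha hb2) (hinc _ _ ha hb3)
    (hinc _ _ ha' hb) (hinc _ _ ha' hb2) (hinc _ _ ha' hb3)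

lemma k23_four_odd {q : ℕ} (hq : q.Prime) (hq2 : q ≠ 2)
    (h4 : 4 ∣ Nat.card G) (hqd : q ∣ Nat.card G) : K23 G := by
  have hq3 : 3 ≤ q := by have := hq.two_le; omega
  have h2 : 2 ∣ Nat.card G := dvd_trans (by norm_num) h4
  have h2q : 2 * q ∣ Nat.card G :=
    Nat.Coprime.mul_dvd_of_dvd_of_dvd
      ((Nat.coprime_primes Nat.prime_two hq).mpr (by omega)) h2 hqd
  obtain ⟨x, hx⟩ := exists_orderOf_eq_dvd h4
  obtain ⟨b, hb⟩ := exists_orderOf_eq_dvd hqd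
  obtain ⟨c, hc⟩ := exists_orderOf_eq_dvd h2q
  have hx' : orderOf x⁻¹ = 4 := by rw [orderOf_inv, hx]
  have hb' : orderOf b⁻¹ = q := by rw [orderOf_inv, hb]
  have hnq4 : ¬ (q ∣ 4) := by
    intro h
    exact hq2 ((Nat.prime_dvd_prime_iff_eq hq Nat.prime_two).mp
      (hq.dvd_of_dvd_pow (n := 2) (m := 2) (show q ∣ 2 ^ 2 by simpa using h)))
  have hn4q : ¬ ((4 : ℕ) ∣ q) := fun h =>
    hq2 ((Nat.prime_dvd_prime_iff_eq Nat.prime_two hq).mp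
      (dvd_trans (by norm_num : (2:ℕ) ∣ 4) h)).symm
  have hn42q : ¬ ((4 : ℕ) ∣ 2 * q) := by
    intro h
    have h' : 2 * 2 ∣ 2 * q := by simpa using h
    have := (Nat.mul_dvd_mul_iff_left (by norm_num : 0 < 2)).mp h'
    exact hq2 ((Nat.prime_dvd_prime_iff_eq Nat.prime_two hq).mp this).symm
  have hn2q4 : ¬ (2 * q ∣ 4) := by
    intro h
    have h' : 2 * q ∣ 2 * 2 := by simpa using h
    have := Nat.le_of_dvd (by norm_num) ((Nat.mul_dvd_mul_iff_left (by norm_num : 0 < 2)).mp h')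
    omega
  have hinc1 : ∀ u v : G, orderOf u = 4 → orderOf v = q → Inc u v := by
    intro u v hu hv
    exact inc_of_orderOf (by rw [hu, hv]; exact hn4q) (by rw [hu, hv]; exact hnq4)
  have hinc2 : ∀ u v : G, orderOf u = 4 → orderOf v = 2 * q → Inc u v := by
    intro u v hu hv
    exact inc_of_orderOf (by rw [hu, hv]; exact hn42q) (by rw [hu, hv]; exact hn2q4)
  refine k23_intro (x₁ := x) (x₂ := x⁻¹) (y₁ := b) (y₂ := b⁻¹) (y₃ := c)
    (ne_one_of_orderOf hx (by omega)) (ne_one_of_orderOf hx' (by omega))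
    (ne_one_of_orderOf hb (by omega)) (ne_one_of_orderOf hb' (by omega))
    (ne_one_of_orderOf hc (by omega))
    (ne_inv_of_orderOf hx (by omega))
    (ne_inv_of_orderOf hb (fun h => by have := Nat.le_of_dvd (by norm_num) h; omega))
    (ne_of_orderOf_ne (by rw [hb, hc]; omega))
    (ne_of_orderOf_ne (by rw [hb', hc]; omega))
    (hinc1 _ _ hx hb) (hinc1 _ _ hx hb') (hinc2 _ _ hx hc)
    (hinc1 _ _ hx' hb) (hinc1 _ _ hx' hb') (hinc2 _ _ hx' hc)

lemma k23_sq_odd {q : ℕ} (hq : q.Prime) (hq2 : q ≠ 2)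
    (h2 : 2 ∣ Nat.card G) (hsq : q ^ 2 ∣ Nat.card G) : K23 G := by
  have hq3 : 3 ≤ q := by have := hq.two_le; omega
  have hqd : q ∣ Nat.card G := dvd_trans (dvd_pow_self q two_ne_zero) hsq
  have h2q : 2 * q ∣ Nat.card G :=
    Nat.Coprime.mul_dvd_of_dvd_of_dvd
      ((Nat.coprime_primes Nat.prime_two hq).mpr (by omega)) h2 hqd
  obtain ⟨c, hc⟩ := exists_orderOf_eq_dvd h2q
  obtain ⟨d, hd⟩ := exists_orderOf_eq_dvd hsq
  have hc' : orderOf c⁻¹ = 2 * q := by rw [orderOf_inv, hc]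
  have hd' : orderOf d⁻¹ = q ^ 2 := by rw [orderOf_inv, hd]
  have hq29 : 9 ≤ q ^ 2 := by
    have : 3 * 3 ≤ q * q := Nat.mul_le_mul hq3 hq3
    nlinarith
  have hco : Nat.gcd (q ^ 2) 2 = 1 :=
    Nat.Coprime.pow_left 2 ((Nat.coprime_primes hq Nat.prime_two).mpr (by omega))
  have hd2 : orderOf (d ^ 2) = q ^ 2 := by rw [orderOf_pow, hd, hco, Nat.div_one]
  have hnd1 : ¬ (2 * q ∣ q ^ 2) := by
    intro h
    have h2q2 : (2 : ℕ) ∣ q ^ 2 := dvd_trans (dvd_mul_right 2 q) h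
    have := Nat.Prime.dvd_of_dvd_pow Nat.prime_two h2q2
    exact hq2 ((Nat.prime_dvd_prime_iff_eq Nat.prime_two hq).mp this).symm
  have hnd2 : ¬ (q ^ 2 ∣ 2 * q) := by
    intro h
    have h' : q * q ∣ q * 2 := by
      have : q ^ 2 = q * q := by ring
      rw [this] at h
      simpa [mul_comm] using h
    have := Nat.le_of_dvd (by norm_num) ((Nat.mul_dvd_mul_iff_left (by omega : 0 < q)).mp h')
    omega
  have hinc : ∀ u v : G, orderOf u = 2 * q → orderOf v = q ^ 2 → Inc u v := by
    intro u v hu hv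
    exact inc_of_orderOf (by rw [hu, hv]; exact hnd1) (by rw [hu, hv]; exact hnd2)
  have hdni : d ^ 2 ≠ d⁻¹ := by
    intro h
    have h3 : d ^ 3 = 1 := by rw [pow_succ, h, inv_mul_cancel]
    have : orderOf d ∣ 3 := orderOf_dvd_iff_pow_eq_one.mpr h3
    rw [hd] at this
    have := Nat.le_of_dvd (by norm_num) this
    omega
  refine k23_intro (x₁ := c) (x₂ := c⁻¹) (y₁ := d) (y₂ := d ^ 2) (y₃ := d⁻¹)
    (ne_one_of_orderOf hc (by omega)) (ne_one_of_orderOf hc' (by omega))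
    (ne_one_of_orderOf hd (by omega)) (ne_one_of_orderOf hd2 (by omega))
    (ne_one_of_orderOf hd' (by omega))
    (ne_inv_of_orderOf hc (fun h => by have := Nat.le_of_dvd (by norm_num) h; omega))
    (by simpa using pow_ne_pow hd (i := 1) (j := 2) (by norm_num) (by omega))
    (ne_inv_of_orderOf hd (fun h => by have := Nat.le_of_dvd (by norm_num) h; omega))
    hdni
    (hinc _ _ hc hd) (hinc _ _ hc hd2) (hinc _ _ hc hd')
    (hinc _ _ hc' hd) (hinc _ _ hc' hd2) (hinc _ _ hc' hd')
end Cyclic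


lemma numth {n : ℕ} (h2 : 2 ≤ n)
    (hodd : ∀ q r : ℕ, q.Prime → r.Prime → q ≠ 2 → r ≠ 2 → q ∣ n → r ∣ n → q = r)
    (h4 : ∀ q : ℕ, q.Prime → q ≠ 2 → q ∣ n → ¬ (4 ∣ n))
    (hsq : ∀ q : ℕ, q.Prime → q ≠ 2 → ¬ (2 ∣ n ∧ q ^ 2 ∣ n)) :
    (∃ p k : ℕ, p.Prime ∧ 1 ≤ k ∧ n = p ^ k) ∨ (∃ q : ℕ, q.Prime ∧ q ≠ 2 ∧ n = 2 * q) := by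
  have hn0 : n ≠ 0 := by omega
  have hn1 : n ≠ 1 := by omega
  by_cases hu : ∀ d : ℕ, d.Prime → d ∣ n → d = n.minFac
  · left
    have hpow := Nat.eq_prime_pow_of_unique_prime_dvd hn0 (fun {d} hd hdn => hu d hd hdn)
    refine ⟨n.minFac, n.primeFactorsList.length, Nat.minFac_prime hn1, ?_, hpow⟩
    rcases Nat.eq_zero_or_pos n.primeFactorsList.length with h0 | h1
    · rw [h0, pow_zero] at hpow; omega
    · exact h1
  · push_neg at hu
    obtain ⟨d, hd, hdn, hdm⟩ := hu
    have hmfp : n.minFac.Prime := Nat.minFac_prime hn1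
    have hmfd : n.minFac ∣ n := Nat.minFac_dvd n
    have hled : n.minFac ≤ d := Nat.minFac_le_of_dvd hd.two_le hdn
    have hmf2 : n.minFac = 2 := by
      by_contra hne
      have hd2 : d ≠ 2 := by have := hmfp.two_le; omega
      exact hdm (hodd d n.minFac hd hmfp hd2 hne hdn hmfd)
    have hd2 : d ≠ 2 := by omega
    have h2n : 2 ∣ n := hmf2 ▸ hmfd
    right
    refine ⟨d, hd, hd2, ?_⟩
    have h2dd : 2 * d ∣ n :=
      Nat.Coprime.mul_dvd_of_dvd_of_dvd
        ((Nat.coprime_primes Nat.prime_two hd).mpr (Ne.symm hd2)) h2n hdn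
    obtain ⟨e, he⟩ := h2dd
    by_cases he1 : e = 1
    · rw [he, he1, mul_one]
    · exfalso
      have he0 : e ≠ 0 := by rintro rfl; simp at he; omega
      have hesp : e.minFac.Prime := Nat.minFac_prime he1
      have hedvd : e.minFac ∣ n := dvd_trans (Nat.minFac_dvd e) ⟨2 * d, by rw [he]; ring⟩
      rcases (em (e.minFac = 2)).imp id
          (fun hs2 => hodd e.minFac d hesp hd hs2 hd2 hedvd hdn) with hs | hs
      · obtain ⟨e', he'⟩ := hs ▸ Nat.minFac_dvd e
        exact h4 d hd hd2 hdn ⟨d * e', by rw [he, he']; ring⟩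
      · obtain ⟨e', he'⟩ := hs ▸ Nat.minFac_dvd e
        exact hsq d hd hd2 ⟨h2n, ⟨2 * e', by rw [he, he']; ring⟩⟩


/-- `m` generates a maximal cyclic subgroup. -/
def IsCMax (m : G) : Prop := ∀ y : G, m ∈ zpowers y → zpowers y = zpowers m

lemma isCMax_congr {a b : G} (ha : IsCMax a) (h : zpowers b = zpowers a) : IsCMax b := by
  intro y hy
  have hb : zpowers b ≤ zpowers y := zpowers_le.mpr hy
  have haz : a ∈ zpowers y := hb (by rw [h]; exact mem_zpowers a)
  exact (ha y haz).trans h.symm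

lemma isCMax_inc {a b : G} (ha : IsCMax a) (hb : IsCMax b) (h : zpowers a ≠ zpowers b) :
    Inc a b :=
  ⟨fun hab => h (ha b hab).symm, fun hba => h (hb a hba)⟩

lemma exists_isCMax [Finite G] (x : G) : ∃ m : G, x ∈ zpowers m ∧ IsCMax m := by
  suffices H : ∀ k : ℕ, ∀ x : G, Nat.card G ≤ Nat.card (zpowers x) + k →
      ∃ m : G, x ∈ zpowers m ∧ IsCMax m from
    H (Nat.card G) x (Nat.le_add_left _ _)
  intro k
  induction k with
  | zero =>
    intro x hx
    have htop : zpowers x = ⊤ := Subgroup.eq_top_of_le_card _ (by simpa using hx)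
    refine ⟨x, mem_zpowers x, fun y hy => ?_⟩
    have h1 : zpowers x ≤ zpowers y := zpowers_le.mpr hy
    rw [htop] at h1 ⊢
    exact (top_le_iff.mp h1).trans rfl
  | succ k ih =>
    intro x hx
    by_cases hc : IsCMax x
    · exact ⟨x, mem_zpowers x, hc⟩
    · unfold IsCMax at hc
      push_neg at hc
      obtain ⟨y, hxy, hne⟩ := hc
      have hlt : zpowers x < zpowers y := lt_of_le_of_ne (zpowers_le.mpr hxy) (Ne.symm hne)
      have hcard : Nat.card (zpowers x) < Nat.card (zpowers y) := by
        have hset : ((zpowers x : Subgroup G) : Set G) ⊂ ((zpowers y : Subgroup G) : Set G) :=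
          SetLike.coe_ssubset_coe.mpr hlt
        have h1 := Set.ncard_lt_ncard hset (Set.toFinite _)
        rwa [← Nat.card_coe_set_eq, ← Nat.card_coe_set_eq, SetLike.coe_sort_coe,
          SetLike.coe_sort_coe] at h1
      obtain ⟨m, hym, hm⟩ := ih y (by omega)
      exact ⟨m, (zpowers_le.mpr hym) hxy, hm⟩

lemma two_mul_card_le [Finite G] {H : Subgroup G} (h : H ≠ ⊤) :
    2 * Nat.card H ≤ Nat.card G := by
  have hmi := Subgroup.card_mul_index H
  have h2 : 2 ≤ H.index := Subgroup.one_lt_index_of_ne_top h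
  calc 2 * Nat.card H = Nat.card H * 2 := mul_comm _ _
    _ ≤ Nat.card H * H.index := Nat.mul_le_mul_left _ h2
    _ = Nat.card G := hmi

lemma exists_outside [Finite G] {H K : Subgroup G} (hH : H ≠ ⊤) (hK : K ≠ ⊤) :
    ∃ c : G, c ∉ H ∧ c ∉ K := by
  classical
  cases nonempty_fintype G
  by_contra h
  push_neg at h
  set A := (H : Set G).toFinset with hA
  set B := (K : Set G).toFinset with hB
  have hsub : (Finset.univ : Finset G) ⊆ A ∪ B := by
    intro c _
    rcases em (c ∈ H) with hc | hc
    · exact Finset.mem_union_left _ (by simp [hA, hc])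
    · exact Finset.mem_union_right _ (by simp [hB, h c hc])
  have hinter : 0 < (A ∩ B).card := by
    refine Finset.card_pos.mpr ⟨1, ?_⟩
    simp [hA, hB, Finset.mem_inter, one_mem]
  have huni := Finset.card_union_add_card_inter A B
  have hcardA : A.card = Nat.card H := by
    simp [hA, Set.toFinset_card, Nat.card_eq_fintype_card]
  have hcardB : B.card = Nat.card K := by
    simp [hB, Set.toFinset_card, Nat.card_eq_fintype_card]
  have hGA := two_mul_card_le hH
  have hGB := two_mul_card_le hK
  have hcardG : (Finset.univ : Finset G).card = Nat.card G := by
    simp [Nat.card_eq_fintype_card]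
  have hle := Finset.card_le_card hsub
  omega



lemma exists_three {α : Type*} [DecidableEq α] (s : Finset α) (h : 3 ≤ s.card) :
    ∃ a b c, a ∈ s ∧ b ∈ s ∧ c ∈ s ∧ a ≠ b ∧ a ≠ c ∧ b ≠ c := by
  obtain ⟨a, ha⟩ := Finset.card_pos.mp (show 0 < s.card by omega)
  have h1 : 2 ≤ (s.erase a).card := by rw [Finset.card_erase_of_mem ha]; omega
  obtain ⟨b, hb⟩ := Finset.card_pos.mp (show 0 < (s.erase a).card by omega)
  have h2 : 1 ≤ ((s.erase a).erase b).card := by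
    rw [Finset.card_erase_of_mem hb, Finset.card_erase_of_mem ha]; omega
  obtain ⟨c, hc⟩ := Finset.card_pos.mp (show 0 < ((s.erase a).erase b).card by omega)
  refine ⟨a, b, c, ha, Finset.mem_of_mem_erase hb,
    Finset.mem_of_mem_erase (Finset.mem_of_mem_erase hc), ?_, ?_, ?_⟩
  · exact fun h' => (Finset.ne_of_mem_erase hb) h'.symm
  · exact fun h' => (Finset.ne_of_mem_erase (Finset.mem_of_mem_erase hc)) h'.symm
  · exact fun h' => (Finset.ne_of_mem_erase hc) h'.symm

lemma exists_five {α : Type*} [DecidableEq α] (s : Finset α) (h : 5 ≤ s.card) :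
    ∃ a b c d e, a ∈ s ∧ b ∈ s ∧ c ∈ s ∧ d ∈ s ∧ e ∈ s ∧
      a ≠ b ∧ a ≠ c ∧ a ≠ d ∧ a ≠ e ∧ b ≠ c ∧ b ≠ d ∧ b ≠ e ∧ c ≠ d ∧ c ≠ e ∧ d ≠ e := by
  obtain ⟨a, ha⟩ := Finset.card_pos.mp (show 0 < s.card by omega)
  have h1 : 4 ≤ (s.erase a).card := by rw [Finset.card_erase_of_mem ha]; omega
  obtain ⟨b, hb⟩ := Finset.card_pos.mp (show 0 < (s.erase a).card by omega)
  have h2 : 3 ≤ ((s.erase a).erase b).card := by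
    rw [Finset.card_erase_of_mem hb]; omega
  obtain ⟨c, d, e, hc, hd, he, hcd, hce, hde⟩ := exists_three _ h2
  have hbs := Finset.mem_of_mem_erase hb
  have hcs' := Finset.mem_of_mem_erase hc
  have hds' := Finset.mem_of_mem_erase hd
  have hes' := Finset.mem_of_mem_erase he
  refine ⟨a, b, c, d, e, ha, hbs, Finset.mem_of_mem_erase hcs',
    Finset.mem_of_mem_erase hds', Finset.mem_of_mem_erase hes', ?_, ?_, ?_, ?_, ?_, ?_, ?_,
    hcd, hce, hde⟩
  · exact fun h' => (Finset.ne_of_mem_erase hb) h'.symm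
  · exact fun h' => (Finset.ne_of_mem_erase hcs') h'.symm
  · exact fun h' => (Finset.ne_of_mem_erase hds') h'.symm
  · exact fun h' => (Finset.ne_of_mem_erase hes') h'.symm
  · exact fun h' => (Finset.ne_of_mem_erase hc) h'.symm
  · exact fun h' => (Finset.ne_of_mem_erase hd) h'.symm
  · exact fun h' => (Finset.ne_of_mem_erase he) h'.symm


lemma not_isCyclic_top {a : G} (hnc : ¬ IsCyclic G) : zpowers a ≠ ⊤ := by
  intro h
  apply hnc
  constructor
  refine ⟨a, fun x => ?_⟩
  show x ∈ zpowers a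
  rw [h]
  exact Subgroup.mem_top x

lemma ne_one_of_three_le_orderOf {a : G} (h : 3 ≤ orderOf a) : a ≠ 1 := by
  intro h1; rw [h1, orderOf_one] at h; omega

lemma ne_inv_of_three_le_orderOf {a : G} (h : 3 ≤ orderOf a) : a ≠ a⁻¹ := by
  intro h1
  have h2 : a ^ 2 = 1 := by rw [pow_two]; nth_rewrite 2 [h1]; rw [mul_inv_cancel]
  have := Nat.le_of_dvd (by norm_num) (orderOf_dvd_iff_pow_eq_one.mpr h2)
  omega

lemma k23_two_big [Finite G] (hnc : ¬ IsCyclic G) {a b : G} (ha : IsCMax a) (hb : IsCMax b)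
    (hne : zpowers a ≠ zpowers b) (h3a : 3 ≤ orderOf a) (h3b : 3 ≤ orderOf b) : K23 G := by
  obtain ⟨c, hca, hcb⟩ := exists_outside (not_isCyclic_top (a := a) hnc)
    (not_isCyclic_top (a := b) hnc)
  obtain ⟨m, hcm, hm⟩ := exists_isCMax c
  have hma : zpowers m ≠ zpowers a := fun h => hca (h ▸ hcm)
  have hmb : zpowers m ≠ zpowers b := fun h => hcb (h ▸ hcm)
  have hm1 : m ≠ 1 := by
    rintro rfl
    rw [zpowers_one_eq_bot] at hcm
    exact hca ((Subgroup.mem_bot.mp hcm) ▸ one_mem _)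
  have hainv : IsCMax a⁻¹ := isCMax_congr ha zpowers_inv
  have hbinv : IsCMax b⁻¹ := isCMax_congr hb zpowers_inv
  refine k23_intro (x₁ := a) (x₂ := a⁻¹) (y₁ := b) (y₂ := b⁻¹) (y₃ := m)
    (ne_one_of_three_le_orderOf h3a) (by simpa using (ne_one_of_three_le_orderOf h3a))
    (ne_one_of_three_le_orderOf h3b) (by simpa using (ne_one_of_three_le_orderOf h3b))
    hm1
    (ne_inv_of_three_le_orderOf h3a)
    (ne_inv_of_three_le_orderOf h3b)
    (fun h => hmb (by rw [h]))
    (fun h => hmb (by rw [← h, zpowers_inv]))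
    (isCMax_inc ha hb hne)
    (isCMax_inc ha hbinv (by rw [zpowers_inv]; exact hne))
    (isCMax_inc ha hm (Ne.symm hma))
    (isCMax_inc hainv hb (by rw [zpowers_inv]; exact hne))
    (isCMax_inc hainv hbinv (by rw [zpowers_inv, zpowers_inv]; exact hne))
    (isCMax_inc hainv hm (by rw [zpowers_inv]; exact Ne.symm hma))

lemma noncyclic_card [Finite G] [Nontrivial G] (hnc : ¬ IsCyclic G) (hno : ¬ K23 G) :
    Nat.card G = 4 ∧ ∀ x : G, x ^ 2 = 1 := by
  classical
  cases nonempty_fintype G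
  have hsq : ∀ x : G, x ^ 2 = 1 := by
    by_contra hx
    push_neg at hx
    obtain ⟨m0, hm0⟩ := hx
    obtain ⟨m, hm0m, hm⟩ := exists_isCMax m0
    have hm0d : ¬ orderOf m0 ∣ 2 := fun h => hm0 (orderOf_dvd_iff_pow_eq_one.mp h)
    have h3 : 3 ≤ orderOf m := by
      by_contra hlt
      push_neg at hlt
      have hpos : 0 < orderOf m := orderOf_pos m
      have : orderOf m ∣ 2 := by interval_cases h : orderOf m <;> norm_num
      exact hm0d ((orderOf_dvd_of_mem_zpowers hm0m).trans this)
    have hout : ∀ x : G, x ∉ zpowers m → x ≠ 1 ∧ x ^ 2 = 1 := by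
      intro x hxm
      refine ⟨fun h1 => hxm (h1 ▸ one_mem _), ?_⟩
      obtain ⟨m', hxm', hm'⟩ := exists_isCMax x
      have hne : zpowers m' ≠ zpowers m := fun h => hxm (h ▸ hxm')
      have hs : ¬ (3 ≤ orderOf m') := fun h3' => hno (k23_two_big hnc hm' hm hne h3' h3)
      push_neg at hs
      have hpos : 0 < orderOf m' := orderOf_pos m'
      have hdvd : orderOf m' ∣ 2 := by interval_cases h : orderOf m' <;> norm_num
      exact orderOf_dvd_iff_pow_eq_one.mp ((orderOf_dvd_of_mem_zpowers hxm').trans hdvd)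
    have htop : zpowers m ≠ ⊤ := not_isCyclic_top hnc
    set A : Finset G := Finset.univ \ ((zpowers m : Subgroup G) : Set G).toFinset with hA
    have hcardzp : ((zpowers m : Subgroup G) : Set G).toFinset.card = orderOf m := by
      simp [Set.toFinset_card, ← Nat.card_eq_fintype_card]
    have hAcard : 3 ≤ A.card := by
      have h1 := two_mul_card_le htop
      rw [Nat.card_zpowers] at h1
      have h2 : A.card = Fintype.card G - orderOf m := by
        rw [hA, Finset.card_sdiff_of_subset (Finset.subset_univ _), Finset.card_univ, hcardzp]
      rw [← Nat.card_eq_fintype_card] at h2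
      omega
    obtain ⟨t₁, t₂, t₃, ht₁, ht₂, ht₃, h12, h13, h23⟩ := exists_three A hAcard
    have hmem : ∀ t, t ∈ A → t ∉ zpowers m := by
      intro t ht
      rw [hA] at ht
      simp only [Finset.mem_sdiff, Finset.mem_univ, true_and, Set.mem_toFinset,
        SetLike.mem_coe] at ht
      exact ht
    have ho1 := hout t₁ (hmem _ ht₁)
    have ho2 := hout t₂ (hmem _ ht₂)
    have ho3 := hout t₃ (hmem _ ht₃)
    have hincm : ∀ t, t ∉ zpowers m → t ^ 2 = 1 → ∀ g, g ∈ zpowers m → g ≠ 1 → Inc t g := by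
      intro t ht ht2 g hg hg1
      constructor
      · exact fun h => ht (zpowers_le.mpr hg h)
      · intro h
        rcases mem_zpowers_of_sq ht2 h with h1 | h1
        · exact hg1 h1
        · exact ht (h1 ▸ hg)
    have hm3 : m ≠ 1 := ne_one_of_three_le_orderOf h3
    have hminv : m⁻¹ ≠ 1 := by simpa using hm3
    refine hno (k23_intro (x₁ := t₁) (x₂ := t₂) (y₁ := t₃) (y₂ := m) (y₃ := m⁻¹)
      ho1.1 ho2.1 ho3.1 hm3 hminv h12 ?_ ?_ ?_
      (inc_invol ho1.2 ho3.2 ho1.1 ho3.1 h13)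
      (hincm _ (hmem _ ht₁) ho1.2 m (mem_zpowers m) hm3)
      (hincm _ (hmem _ ht₁) ho1.2 m⁻¹ (inv_mem (mem_zpowers m)) hminv)
      (inc_invol ho2.2 ho3.2 ho2.1 ho3.1 h23)
      (hincm _ (hmem _ ht₂) ho2.2 m (mem_zpowers m) hm3)
      (hincm _ (hmem _ ht₂) ho2.2 m⁻¹ (inv_mem (mem_zpowers m)) hminv))
    · exact fun h => (hmem _ ht₃) (h ▸ mem_zpowers m)
    · exact fun h => (hmem _ ht₃) (h ▸ inv_mem (mem_zpowers m))
    · exact ne_inv_of_three_le_orderOf h3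
  -- now every element squares to 1
  have hle5 : Nat.card G ≤ 5 := by
    by_contra hgt
    push_neg at hgt
    have hs : 5 ≤ (Finset.univ.erase (1 : G)).card := by
      rw [Finset.card_erase_of_mem (Finset.mem_univ _), Finset.card_univ,
        ← Nat.card_eq_fintype_card]
      omega
    obtain ⟨a, b, c, d, e, hax, hbx, hcx, hdx, hex,
      hab, hac, had, hae, hbc, hbd, hbe, hcd, hce, hde⟩ := exists_five _ hs
    have hne1 : ∀ x : G, x ∈ Finset.univ.erase (1 : G) → x ≠ 1 := by
      intro x hxx
      exact Finset.ne_of_mem_erase hxx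
    exact hno (k23_intro (x₁ := a) (x₂ := b) (y₁ := c) (y₂ := d) (y₃ := e)
      (hne1 _ hax) (hne1 _ hbx) (hne1 _ hcx) (hne1 _ hdx) (hne1 _ hex)
      hab hcd hce hde
      (inc_invol (hsq a) (hsq c) (hne1 _ hax) (hne1 _ hcx) hac)
      (inc_invol (hsq a) (hsq d) (hne1 _ hax) (hne1 _ hdx) had)
      (inc_invol (hsq a) (hsq e) (hne1 _ hax) (hne1 _ hex) hae)
      (inc_invol (hsq b) (hsq c) (hne1 _ hbx) (hne1 _ hcx) hbc)
      (inc_invol (hsq b) (hsq d) (hne1 _ hbx) (hne1 _ hdx) hbd)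
      (inc_invol (hsq b) (hsq e) (hne1 _ hbx) (hne1 _ hex) hbe))
  have h2le : 2 ≤ Nat.card G := Finite.one_lt_card
  have hnotprime : ∀ p : ℕ, p.Prime → Nat.card G ≠ p := by
    intro p hp hcard
    have : Fact p.Prime := ⟨hp⟩
    exact hnc (isCyclic_of_prime_card hcard)
  have hn2 := hnotprime 2 Nat.prime_two
  have hn3 := hnotprime 3 Nat.prime_three
  have hn5 := hnotprime 5 (by norm_num)
  refine ⟨by omega, hsq⟩



lemma no_k23_prime_pow [Finite G] [IsCyclic G] {p k : ℕ} (hp : p.Prime)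
    (hcard : Nat.card G = p ^ k) : ¬ K23 G := by
  rintro ⟨u₁, u₂, w₁, w₂, w₃, -, -, -, -, h11, -, -, -, -, -⟩
  have hx : orderOf (u₁ : G) ∣ p ^ k := hcard ▸ orderOf_dvd_natCard (u₁ : G)
  have hy : orderOf (w₁ : G) ∣ p ^ k := hcard ▸ orderOf_dvd_natCard (w₁ : G)
  obtain ⟨i, hi, hxi⟩ := (Nat.dvd_prime_pow hp).mp hx
  obtain ⟨j, hj, hyj⟩ := (Nat.dvd_prime_pow hp).mp hy
  rcases le_total i j with h | h
  · exact And.left h11 (mem_zpowers_of_orderOf_dvd (by rw [hxi, hyj]; exact pow_dvd_pow p h))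
  · exact And.right h11 (mem_zpowers_of_orderOf_dvd (by rw [hxi, hyj]; exact pow_dvd_pow p h))

lemma no_k23_card_four [Finite G] (hcard : Nat.card G = 4) : ¬ K23 G := by
  classical
  cases nonempty_fintype G
  rintro ⟨u₁, u₂, w₁, w₂, w₃, hu, h12, h13, h23, a11, a12, a13, a21, a22, a23⟩
  have d11 : u₁ ≠ w₁ := a11.ne
  have d12 : u₁ ≠ w₂ := a12.ne
  have d13 : u₁ ≠ w₃ := a13.ne
  have d21 : u₂ ≠ w₁ := a21.ne
  have d22 : u₂ ≠ w₂ := a22.ne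
  have d23 : u₂ ≠ w₃ := a23.ne
  have h5 : ({u₁, u₂, w₁, w₂, w₃} : Finset {g : G // g ≠ 1}).card = 5 := by
    rw [Finset.card_insert_of_notMem (by simp [hu, d11, d12, d13]),
      Finset.card_insert_of_notMem (by simp [d21, d22, d23]),
      Finset.card_insert_of_notMem (by simp [h12, h13]),
      Finset.card_insert_of_notMem (by simp [h23]), Finset.card_singleton]
  have hle := Finset.card_le_univ ({u₁, u₂, w₁, w₂, w₃} : Finset {g : G // g ≠ 1})
  have hcard3 : Fintype.card {g : G // g ≠ 1} = 3 := by
    have h4 : Fintype.card G = 4 := by rw [← Nat.card_eq_fintype_card, hcard]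
    simp only [ne_eq]
    rw [Fintype.card_subtype_compl, Fintype.card_subtype_eq, h4]
  rw [h5, hcard3] at hle
  omega

lemma no_k23_two_mul [Finite G] [IsCyclic G] {q : ℕ} (hq : q.Prime) (hq2 : q ≠ 2)
    (hcard : Nat.card G = 2 * q) : ¬ K23 G := by
  rintro ⟨u₁, u₂, w₁, w₂, w₃, hu, h12, h13, h23, a11, a12, a13, a21, a22, a23⟩
  have hq3 : 3 ≤ q := by have := hq.two_le; omega
  have horder : ∀ v : {g : G // g ≠ 1},
      orderOf (v : G) = 2 ∨ orderOf (v : G) = q ∨ orderOf (v : G) = 2 * q := by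
    intro v
    have hdvd : orderOf (v : G) ∣ 2 * q := hcard ▸ orderOf_dvd_natCard (v : G)
    have hne1 : orderOf (v : G) ≠ 1 := by
      intro h
      exact v.2 (orderOf_eq_one_iff.mp h)
    by_cases hqd : q ∣ orderOf (v : G)
    · obtain ⟨e, he⟩ := hqd
      have he2 : e ∣ 2 := by
        have h' : q * e ∣ q * 2 := by rw [← he]; rw [mul_comm] at hdvd; exact hdvd
        exact (Nat.mul_dvd_mul_iff_left (by omega : 0 < q)).mp h'
      rcases (Nat.dvd_prime Nat.prime_two).mp he2 with h1 | h1
      · right; left; rw [he, h1, mul_one]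
      · right; right; rw [he, h1, mul_comm]
    · have hcop : Nat.Coprime (orderOf (v : G)) q :=
        Nat.Coprime.symm ((Nat.Prime.coprime_iff_not_dvd hq).mpr hqd)
      have h2 : orderOf (v : G) ∣ 2 := hcop.dvd_of_dvd_mul_right hdvd
      rcases (Nat.dvd_prime Nat.prime_two).mp h2 with h1 | h1
      · exact absurd h1 hne1
      · exact Or.inl h1
  have huniq : ∀ x y : G, orderOf x = 2 → orderOf y = 2 → x = y := by
    intro x y hx hy
    have hmem := mem_zpowers_of_orderOf_dvd (x := x) (y := y) (by rw [hx, hy])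
    have hy2 : y ^ 2 = 1 := by rw [← hy]; exact pow_orderOf_eq_one y
    rcases mem_zpowers_of_sq hy2 hmem with h | h
    · exfalso; rw [h, orderOf_one] at hx; omega
    · exact h
  have hadj : ∀ v w : {g : G // g ≠ 1}, (propPowerCompl G).Adj v w →
      (orderOf (v : G) = 2 ∧ orderOf (w : G) = q) ∨
      (orderOf (v : G) = q ∧ orderOf (w : G) = 2) := by
    intro v w hvw
    have hmem : ∀ x y : G, orderOf x ∣ orderOf y → x ∈ zpowers y :=
      fun x y h => mem_zpowers_of_orderOf_dvd h
    rcases horder v with hv | hv | hv <;> rcases horder w with hw | hw | hw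
    · exact absurd (hmem _ _ (by rw [hv, hw])) (And.left hvw)
    · exact Or.inl ⟨hv, hw⟩
    · exact absurd (hmem _ _ (by rw [hv, hw]; exact ⟨q, rfl⟩)) (And.left hvw)
    · exact Or.inr ⟨hv, hw⟩
    · exact absurd (hmem _ _ (by rw [hv, hw])) (And.left hvw)
    · exact absurd (hmem _ _ (by rw [hv, hw]; exact ⟨2, mul_comm 2 q⟩)) (And.left hvw)
    · exact absurd (hmem _ _ (by rw [hv, hw]; exact ⟨q, rfl⟩)) (And.right hvw)
    · exact absurd (hmem _ _ (by rw [hv, hw]; exact ⟨2, mul_comm 2 q⟩)) (And.right hvw)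
    · exact absurd (hmem _ _ (by rw [hv, hw])) (And.left hvw)
  have hu1 : orderOf (u₁ : G) = 2 := by
    rcases hadj u₁ w₁ a11 with ⟨h, _⟩ | ⟨_, hw1⟩
    · exact h
    rcases hadj u₁ w₂ a12 with ⟨h, _⟩ | ⟨_, hw2⟩
    · exact h
    exact absurd (Subtype.ext (huniq _ _ hw1 hw2)) h12
  have hu2 : orderOf (u₂ : G) = 2 := by
    rcases hadj u₂ w₁ a21 with ⟨h, _⟩ | ⟨_, hw1⟩
    · exact h
    rcases hadj u₂ w₂ a22 with ⟨h, _⟩ | ⟨_, hw2⟩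
    · exact h
    exact absurd (Subtype.ext (huniq _ _ hw1 hw2)) h12
  exact hu (Subtype.ext (huniq _ _ hu1 hu2))


end PPC


/-- For a finite nontrivial group `G`, the complement of the proper power graph of
`G` contains no `K_{2,3}` subgraph iff `G ≅ ℤ/p^nℤ` (`p` prime, `n ≥ 1`),
`G ≅ ℤ/2ℤ × ℤ/2ℤ`, or `G ≅ ℤ/2pℤ` for an odd prime `p`. -/
theorem propPowerCompl_no_K23_iff (G : Type*) [Group G] [Finite G] [Nontrivial G] :
    (¬ ∃ u₁ u₂ w₁ w₂ w₃ : {g : G // g ≠ 1},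
        u₁ ≠ u₂ ∧ w₁ ≠ w₂ ∧ w₁ ≠ w₃ ∧ w₂ ≠ w₃ ∧
        (propPowerCompl G).Adj u₁ w₁ ∧ (propPowerCompl G).Adj u₁ w₂ ∧
        (propPowerCompl G).Adj u₁ w₃ ∧ (propPowerCompl G).Adj u₂ w₁ ∧
        (propPowerCompl G).Adj u₂ w₂ ∧ (propPowerCompl G).Adj u₂ w₃) ↔
      ((∃ p n : ℕ, p.Prime ∧ 1 ≤ n ∧ Nonempty (G ≃* Multiplicative (ZMod (p ^ n)))) ∨
        Nonempty (G ≃* Multiplicative (ZMod 2 × ZMod 2)) ∨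
        (∃ p : ℕ, p.Prime ∧ p ≠ 2 ∧ Nonempty (G ≃* Multiplicative (ZMod (2 * p))))) := by
  show ¬ PPC.K23 G ↔ _
  constructor
  · intro hno
    by_cases hc : IsCyclic G
    · have h2n : 2 ≤ Nat.card G := Finite.one_lt_card
      have hodd : ∀ q r : ℕ, q.Prime → r.Prime → q ≠ 2 → r ≠ 2 →
          q ∣ Nat.card G → r ∣ Nat.card G → q = r := by
        intro q r hqp hrp hq2 hr2 hqd hrd
        by_contra hne
        rcases Nat.lt_or_ge q r with h | h
        · have hr5 : 5 ≤ r := by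
            have hq3 : 3 ≤ q := by have := hqp.two_le; omega
            by_contra h5
            have : r = 4 := by omega
            rw [this] at hrp
            norm_num at hrp
          exact hno (PPC.k23_two_odd hqp hrp hq2 hr5 hne hqd hrd)
        · have hq5 : 5 ≤ q := by
            have hr3 : 3 ≤ r := by have := hrp.two_le; omega
            have hne' : q ≠ r := hne
            by_contra h5
            have : q = 4 := by omega
            rw [this] at hqp
            norm_num at hqp
          exact hno (PPC.k23_two_odd hrp hqp hr2 hq5 (Ne.symm hne) hrd hqd)
      have h4 : ∀ q : ℕ, q.Prime → q ≠ 2 → q ∣ Nat.card G → ¬ (4 ∣ Nat.card G) :=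
        fun q hq hq2 hqd h4d => hno (PPC.k23_four_odd hq hq2 h4d hqd)
      have hsq : ∀ q : ℕ, q.Prime → q ≠ 2 → ¬ (2 ∣ Nat.card G ∧ q ^ 2 ∣ Nat.card G) :=
        fun q hq hq2 h => hno (PPC.k23_sq_odd hq hq2 h.1 h.2)
      rcases PPC.numth h2n hodd h4 hsq with ⟨p, k, hp, hk, hn⟩ | ⟨q, hq, hq2, hn⟩
      · left
        refine ⟨p, k, hp, hk, ?_⟩
        rw [← hn]
        exact ⟨(zmodCyclicMulEquiv hc).symm⟩
      · right; right
        refine ⟨q, hq, hq2, ?_⟩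
        rw [← hn]
        exact ⟨(zmodCyclicMulEquiv hc).symm⟩
    · obtain ⟨hcard, hsq2⟩ := PPC.noncyclic_card hc hno
      right; left
      have hexp : Monoid.exponent G = 2 := by
        have hd : Monoid.exponent G ∣ 2 := Monoid.exponent_dvd_of_forall_pow_eq_one hsq2
        have h1 : Monoid.exponent G ≠ 1 := by
          intro h
          obtain ⟨x, hx⟩ := exists_ne (1 : G)
          have := Monoid.pow_exponent_eq_one x
          rw [h, pow_one] at this
          exact hx this
        rcases (Nat.dvd_prime Nat.prime_two).mp hd with h | h
        · exact absurd h h1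
        · exact h
      have : IsKleinFour G := ⟨hcard, hexp⟩
      exact IsKleinFour.nonempty_mulEquiv
  · rintro (⟨p, k, hp, hk, he⟩ | he | ⟨q, hq, hq2, he⟩) <;> obtain ⟨e⟩ := he
    · have hcy : IsCyclic G := isCyclic_of_surjective e.symm.toMonoidHom e.symm.surjective
      have hcard : Nat.card G = p ^ k := by
        rw [Nat.card_congr e.toEquiv, Nat.card_congr Multiplicative.toAdd, Nat.card_zmod]
      exact PPC.no_k23_prime_pow hp hcard
    · have hcard : Nat.card G = 4 := by
        rw [Nat.card_congr e.toEquiv, Nat.card_congr Multiplicative.toAdd, Nat.card_prod,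
          Nat.card_zmod]
      exact PPC.no_k23_card_four hcard
    · have hcy : IsCyclic G := isCyclic_of_surjective e.symm.toMonoidHom e.symm.surjective
      have hcard : Nat.card G = 2 * q := by
        rw [Nat.card_congr e.toEquiv, Nat.card_congr Multiplicative.toAdd, Nat.card_zmod]
      exact PPC.no_k23_two_mul hq hq2 hcard
end

section
/- Let G be a finite group whose order has at least three distinct prime divisors. Then the complement of the proper power graph of G contains the complete bipartite graph K_{3,3} as a subgraph; that is, there exist six distinct non-identity elements u_1, u_2, u_3, w_1, w_2, w_3 of G such that each u_i is adjacent to each w_j in the complement of the proper power graph. -/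
open SimpleGraph

private lemma nmem_zpowers_of_orders {G : Type*} [Group G] {x y : G} {a b : ℕ}
    (ha : a.Prime) (hb : b.Prime) (hab : a ≠ b)
    (hx : orderOf x = a) (hy : orderOf y = b) : x ∉ Subgroup.zpowers y := by
  intro h
  have hd := orderOf_dvd_of_mem_zpowers h
  rw [hx, hy] at hd
  exact hab ((Nat.prime_dvd_prime_iff_eq ha hb).mp hd)

private lemma key (G : Type*) [Group G] [Finite G]
    (p q r : ℕ) (hp : p.Prime) (hq : q.Prime) (hr : r.Prime)
    (hpq : p < q) (hqr : q < r)
    (hpd : p ∣ Nat.card G) (hqd : q ∣ Nat.card G) (hrd : r ∣ Nat.card G) :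
    ∃ u₁ u₂ u₃ w₁ w₂ w₃ : {g : G // g ≠ 1},
      u₁ ≠ u₂ ∧ u₁ ≠ u₃ ∧ u₂ ≠ u₃ ∧ w₁ ≠ w₂ ∧ w₁ ≠ w₃ ∧ w₂ ≠ w₃ ∧
      u₁ ≠ w₁ ∧ u₁ ≠ w₂ ∧ u₁ ≠ w₃ ∧ u₂ ≠ w₁ ∧ u₂ ≠ w₂ ∧ u₂ ≠ w₃ ∧
      u₃ ≠ w₁ ∧ u₃ ≠ w₂ ∧ u₃ ≠ w₃ ∧
      (propPowerCompl G).Adj u₁ w₁ ∧ (propPowerCompl G).Adj u₁ w₂ ∧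
      (propPowerCompl G).Adj u₁ w₃ ∧ (propPowerCompl G).Adj u₂ w₁ ∧
      (propPowerCompl G).Adj u₂ w₂ ∧ (propPowerCompl G).Adj u₂ w₃ ∧
      (propPowerCompl G).Adj u₃ w₁ ∧ (propPowerCompl G).Adj u₃ w₂ ∧
      (propPowerCompl G).Adj u₃ w₃ := by
  have fp : Fact p.Prime := ⟨hp⟩
  have fq : Fact q.Prime := ⟨hq⟩
  have fr : Fact r.Prime := ⟨hr⟩
  obtain ⟨a, ha⟩ := exists_prime_orderOf_dvd_card' p hpd
  obtain ⟨b, hb⟩ := exists_prime_orderOf_dvd_card' q hqd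
  obtain ⟨c, hc⟩ := exists_prime_orderOf_dvd_card' r hrd
  have hpne : p ≠ q := hpq.ne
  have hpr : p ≠ r := (hpq.trans hqr).ne
  have hqr' : q ≠ r := hqr.ne
  have hp2 : 2 ≤ p := hp.two_le
  have hq3 : 3 ≤ q := by omega
  have hr5 : 5 ≤ r := by
    rcases Nat.lt_or_ge r 5 with h | h
    · interval_cases r <;> first | omega | (exfalso; revert hr; decide)
    · exact h
  have ha1 : a ≠ 1 := by
    intro h; rw [h, orderOf_one] at ha; omega
  have hb1 : b ≠ 1 := by
    intro h; rw [h, orderOf_one] at hb; omega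
  have hbinv1 : b⁻¹ ≠ 1 := by simpa using hb1
  have hbinv : orderOf b⁻¹ = q := by rw [orderOf_inv, hb]
  have hck : ∀ k : ℕ, 0 < k → k < r → orderOf (c ^ k) = r ∧ c ^ k ≠ 1 := by
    intro k hk0 hkr
    have hne : c ^ k ≠ 1 := by
      intro h
      have hd := orderOf_dvd_of_pow_eq_one h
      rw [hc] at hd
      have := Nat.le_of_dvd hk0 hd
      omega
    refine ⟨?_, hne⟩
    have hpow : (c ^ k) ^ r = 1 := by
      rw [← pow_mul, mul_comm, pow_mul, ← hc, pow_orderOf_eq_one, one_pow]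
    exact orderOf_eq_prime hpow hne
  obtain ⟨hc1o, hc1n⟩ := hck 1 (by omega) (by omega)
  obtain ⟨hc2o, hc2n⟩ := hck 2 (by omega) (by omega)
  obtain ⟨hc3o, hc3n⟩ := hck 3 (by omega) (by omega)
  have hb2 : b ^ 2 ≠ 1 := by
    intro h
    have hd := orderOf_dvd_of_pow_eq_one h
    rw [hb] at hd
    have := Nat.le_of_dvd (by omega) hd
    omega
  -- adjacency helper
  have adj : ∀ (x y : G) (hx1 : x ≠ 1) (hy1 : y ≠ 1) (s : ℕ) (hs : s.Prime) (hsr : s ≠ r),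
      orderOf x = s → orderOf y = r →
      (propPowerCompl G).Adj ⟨x, hx1⟩ ⟨y, hy1⟩ := by
    intro x y hx1 hy1 s hs hsr hx hy
    exact ⟨nmem_zpowers_of_orders hs hr hsr hx hy,
      nmem_zpowers_of_orders hr hs (Ne.symm hsr) hy hx⟩
  have A11 := adj a (c ^ 1) ha1 hc1n p hp hpr ha hc1o
  have A12 := adj a (c ^ 2) ha1 hc2n p hp hpr ha hc2o
  have A13 := adj a (c ^ 3) ha1 hc3n p hp hpr ha hc3o
  have A21 := adj b (c ^ 1) hb1 hc1n q hq hqr' hb hc1o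
  have A22 := adj b (c ^ 2) hb1 hc2n q hq hqr' hb hc2o
  have A23 := adj b (c ^ 3) hb1 hc3n q hq hqr' hb hc3o
  have A31 := adj b⁻¹ (c ^ 1) hbinv1 hc1n q hq hqr' hbinv hc1o
  have A32 := adj b⁻¹ (c ^ 2) hbinv1 hc2n q hq hqr' hbinv hc2o
  have A33 := adj b⁻¹ (c ^ 3) hbinv1 hc3n q hq hqr' hbinv hc3o
  refine ⟨⟨a, ha1⟩, ⟨b, hb1⟩, ⟨b⁻¹, hbinv1⟩, ⟨c ^ 1, hc1n⟩, ⟨c ^ 2, hc2n⟩, ⟨c ^ 3, hc3n⟩,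
    ?_, ?_, ?_, ?_, ?_, ?_,
    A11.ne, A12.ne, A13.ne, A21.ne, A22.ne, A23.ne, A31.ne, A32.ne, A33.ne,
    A11, A12, A13, A21, A22, A23, A31, A32, A33⟩
  · intro h
    have : a = b := congrArg Subtype.val h
    rw [← this, ha] at hb
    omega
  · intro h
    have : a = b⁻¹ := congrArg Subtype.val h
    rw [← this, ha] at hbinv
    omega
  · intro h
    have hbb : b = b⁻¹ := congrArg Subtype.val h
    apply hb2
    rw [pow_two]
    nth_rewrite 2 [hbb]
    simp
  · intro h
    have hcc : c ^ 1 = c ^ 2 := congrArg Subtype.val h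
    apply hc1n
    have h2 : c * 1 = c * c := by rw [mul_one, ← pow_two, ← hcc, pow_one]
    rw [pow_one]
    exact (mul_left_cancel h2).symm
  · intro h
    have hcc : c ^ 1 = c ^ 3 := congrArg Subtype.val h
    apply hc2n
    have h2 : c * 1 = c * c ^ 2 := by
      rw [mul_one, ← pow_succ', ← hcc, pow_one]
    exact (mul_left_cancel h2).symm
  · intro h
    have hcc : c ^ 2 = c ^ 3 := congrArg Subtype.val h
    apply hc1n
    have h2 : c ^ 2 * 1 = c ^ 2 * c := by
      rw [mul_one, ← pow_succ, ← hcc]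
    rw [pow_one]
    exact (mul_left_cancel h2).symm

/-- If the order of a finite group `G` has at least three distinct prime divisors,
then the complement of the proper power graph of `G` contains `K_{3,3}` as a
subgraph: there are six distinct non-identity elements `u₁, u₂, u₃, w₁, w₂, w₃` with
each `uᵢ` adjacent to each `wⱼ`. -/
theorem propPowerCompl_contains_K33 (G : Type*) [Group G] [Finite G]
    (p q r : ℕ) (hp : p.Prime) (hq : q.Prime) (hr : r.Prime)
    (hpq : p ≠ q) (hpr : p ≠ r) (hqr : q ≠ r)
    (hpd : p ∣ Nat.card G) (hqd : q ∣ Nat.card G) (hrd : r ∣ Nat.card G) :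
    ∃ u₁ u₂ u₃ w₁ w₂ w₃ : {g : G // g ≠ 1},
      u₁ ≠ u₂ ∧ u₁ ≠ u₃ ∧ u₂ ≠ u₃ ∧ w₁ ≠ w₂ ∧ w₁ ≠ w₃ ∧ w₂ ≠ w₃ ∧
      u₁ ≠ w₁ ∧ u₁ ≠ w₂ ∧ u₁ ≠ w₃ ∧ u₂ ≠ w₁ ∧ u₂ ≠ w₂ ∧ u₂ ≠ w₃ ∧
      u₃ ≠ w₁ ∧ u₃ ≠ w₂ ∧ u₃ ≠ w₃ ∧
      (propPowerCompl G).Adj u₁ w₁ ∧ (propPowerCompl G).Adj u₁ w₂ ∧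
      (propPowerCompl G).Adj u₁ w₃ ∧ (propPowerCompl G).Adj u₂ w₁ ∧
      (propPowerCompl G).Adj u₂ w₂ ∧ (propPowerCompl G).Adj u₂ w₃ ∧
      (propPowerCompl G).Adj u₃ w₁ ∧ (propPowerCompl G).Adj u₃ w₂ ∧
      (propPowerCompl G).Adj u₃ w₃ := by
  rcases lt_trichotomy p q with h1 | h1 | h1
  · rcases lt_trichotomy q r with h2 | h2 | h2
    · exact key G p q r hp hq hr h1 h2 hpd hqd hrd
    · exact absurd h2 hqr
    · rcases lt_trichotomy p r with h3 | h3 | h3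
      · exact key G p r q hp hr hq h3 h2 hpd hrd hqd
      · exact absurd h3 hpr
      · exact key G r p q hr hp hq h3 h1 hrd hpd hqd
  · exact absurd h1 hpq
  · rcases lt_trichotomy p r with h2 | h2 | h2
    · exact key G q p r hq hp hr h1 h2 hqd hpd hrd
    · exact absurd h2 hpr
    · rcases lt_trichotomy q r with h3 | h3 | h3
      · exact key G q r p hq hr hp h3 h2 hqd hrd hpd
      · exact absurd h3 hqr
      · exact key G r q p hr hq hp h3 h1 hrd hqd hpd
end
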